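/- arXiv:2201.07668 — 4 statements merged into one kernel-verified Lean document; each statement's English description precedes it below -/
import Mathlib

section
/- For every real x > 0, every integer l ∈ ℤ, and every real c < 0, one has −(1/(2π)) ∫_{−∞}^{∞} exp( x (c+iτ)(2(c+iτ) − 1 − 2l) ) / (c+iτ) dτ = (1/2) [ 1 + erf( (2l+1) √(x/8) ) ]. (This is the evaluation of the contour integral −(1/(2πi)) ∫_{C_−} e^{x s(2s−1−2l)} ds/s over a vertical line C_− passing to the left of the origin.) -/
open MeasureTheory

/-- The error function `erf x = (2/√π) ∫_0^x e^{-s²} ds`. -/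
noncomputable def erf (x : ℝ) : ℝ :=
  (2 / Real.sqrt Real.pi) * ∫ s in (0:ℝ)..x, Real.exp (-s ^ 2)

open MeasureTheory Set Filter Complex
open scoped Topology

lemma laplace_one {s : ℂ} (hs : s.re < 0) :
    ∫ t in Ioi (0:ℝ), Complex.exp (t * s) = -s⁻¹ := by
  have hs0 : s ≠ 0 := fun h => by simp [h] at hs
  have hderiv : ∀ t ∈ Ici (0:ℝ), HasDerivAt (fun t : ℝ => Complex.exp (t * s) / s)
      (Complex.exp (t * s)) t := by
    intro t _
    have h1 : HasDerivAt (fun t : ℝ => (t:ℂ) * s) s t := by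
      simpa using (Complex.ofRealCLM.hasDerivAt (x := t)).mul_const s
    have h2 := (h1.cexp).div_const s
    simpa [mul_div_cancel_right₀ _ hs0] using h2
  have hint : IntegrableOn (fun t : ℝ => Complex.exp (t * s)) (Ioi 0) := by
    have hb : (0:ℝ) < -s.re := by linarith
    refine (exp_neg_integrableOn_Ioi 0 hb).mono' ?_ ?_
    · exact (Complex.continuous_exp.comp (continuous_ofReal.mul continuous_const)).aestronglyMeasurable
    · filter_upwards with t
      simp [Complex.norm_exp, mul_comm]
  have htend : Tendsto (fun t : ℝ => Complex.exp (t * s) / s) atTop (𝓝 0) := by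
    rw [tendsto_zero_iff_norm_tendsto_zero]
    have : (fun t : ℝ => ‖Complex.exp (t * s) / s‖) = fun t => Real.exp (s.re * t) / ‖s‖ := by
      funext t; simp [Complex.norm_exp, mul_comm]
    rw [this]
    have hb : Tendsto (fun t : ℝ => s.re * t) atTop atBot :=
      tendsto_id.const_mul_atTop_of_neg hs
    simpa using (Real.tendsto_exp_atBot.comp hb).div_const ‖s‖
  have := integral_Ioi_of_hasDerivAt_of_tendsto' hderiv hint htend
  simp only [this]
  simp [div_eq_mul_inv]

lemma integrable_gauss : Integrable (fun v : ℝ => Real.exp (-v ^ 2)) := by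
  simpa using integrable_exp_neg_mul_sq one_pos

lemma gaussian_tail (m : ℝ) :
    ∫ v in Ioi m, Real.exp (-v ^ 2) =
      Real.sqrt Real.pi / 2 - ∫ s in (0:ℝ)..m, Real.exp (-s ^ 2) := by
  have hc : Continuous fun v : ℝ => Real.exp (-v ^ 2) :=
    Real.continuous_exp.comp (continuous_pow 2).neg
  have hderiv : ∀ u ∈ Ici m, HasDerivAt (fun u : ℝ => ∫ s in (0:ℝ)..u, Real.exp (-s ^ 2))
      (Real.exp (-u ^ 2)) u := by
    intro u _
    exact (intervalIntegral.integral_hasStrictDerivAt_right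
      integrable_gauss.intervalIntegrable (hc.stronglyMeasurableAtFilter _ _)
      hc.continuousAt).hasDerivAt
  have htend : Tendsto (fun u : ℝ => ∫ s in (0:ℝ)..u, Real.exp (-s ^ 2)) atTop
      (𝓝 (Real.sqrt Real.pi / 2)) := by
    have h0 : ∫ v in Ioi (0:ℝ), Real.exp (-v ^ 2) = Real.sqrt Real.pi / 2 := by
      simpa using integral_gaussian_Ioi 1
    have := intervalIntegral_tendsto_integral_Ioi 0 integrable_gauss.integrableOn tendsto_id
    rwa [h0] at this
  exact integral_Ioi_of_hasDerivAt_of_tendsto' hderiv integrable_gauss.integrableOn htend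

lemma integral_Ioi_comp_add_right (g : ℝ → ℝ) (a b : ℝ) :
    ∫ t in Ioi a, g (t + b) = ∫ u in Ioi (a + b), g u := by
  have h := (measurePreserving_add_right (volume : Measure ℝ) b).setIntegral_preimage_emb
    (MeasurableEquiv.addRight b).measurableEmbedding g (Ioi (a + b))
  have hpre : (MeasurableEquiv.addRight b) ⁻¹' Ioi (a + b) = Ioi a := by
    ext t; simp [MeasurableEquiv.addRight]
  simpa [hpre] using h

lemma vertical_gaussian {x : ℝ} (hx : 0 < x) (c : ℝ) (B : ℂ) :
    ∫ τ : ℝ, Complex.exp (2*(x:ℂ) * ((c:ℂ) + (τ:ℂ) * Complex.I)^2 + B * ((c:ℂ) + (τ:ℂ) * Complex.I))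
      = ((Real.sqrt (Real.pi/(2*x)) : ℝ) : ℂ) * Complex.exp (-B^2 / (8*(x:ℂ))) := by
  have hX : (x:ℂ) ≠ 0 := by exact_mod_cast hx.ne'
  have hb : (-(2*(x:ℂ))).re < 0 := by
    simpa using hx
  have hfun : ∀ τ : ℝ, 2*(x:ℂ) * ((c:ℂ) + (τ:ℂ) * Complex.I)^2 + B * ((c:ℂ) + (τ:ℂ) * Complex.I)
      = -(2*(x:ℂ)) * (τ:ℂ)^2 + ((4*(x:ℂ)*(c:ℂ) + B) * Complex.I) * (τ:ℂ)
        + (2*(x:ℂ)*(c:ℂ)^2 + B*(c:ℂ)) := by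
    intro τ
    linear_combination (2*(x:ℂ)*(τ:ℂ)^2) * Complex.I_sq
  simp_rw [hfun]
  rw [integral_cexp_quadratic hb]
  congr 1
  · rw [neg_neg, show ((Real.pi:ℂ)) / (2*(x:ℂ)) = ((Real.pi/(2*x) : ℝ) : ℂ) by push_cast; ring,
      show ((1:ℂ)/2) = (((1:ℝ)/2 : ℝ) : ℂ) by norm_num,
      ← Complex.ofReal_cpow (by positivity)]
    norm_num [Real.sqrt_eq_rpow]
  · congr 1
    have h2 : ((4*(x:ℂ)*(c:ℂ) + B) * Complex.I)^2 = -((4*(x:ℂ)*(c:ℂ) + B))^2 := by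
      linear_combination ((4*(x:ℂ)*(c:ℂ) + B))^2 * Complex.I_sq
    rw [h2]
    field_simp
    ring

lemma real_final (x : ℝ) (hx : 0 < x) (l : ℤ) :
    (1/(2*Real.pi)) * ∫ t in Ioi (0:ℝ),
        Real.sqrt (Real.pi/(2*x)) * Real.exp (-(t + (-(2*(l:ℝ)+1)*x))^2/(8*x))
      = 1/2 * (1 + erf ((2*(l:ℝ)+1) * Real.sqrt (x/8))) := by
  set b : ℝ := -(2*(l:ℝ)+1)*x with hbdef
  set k : ℝ := Real.sqrt (8*x) with hkdef
  have hk : 0 < k := Real.sqrt_pos.mpr (by positivity)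
  have hk2 : k^2 = 8*x := Real.sq_sqrt (by positivity)
  rw [integral_const_mul]
  have h1 : ∫ t in Ioi (0:ℝ), Real.exp (-(t+b)^2/(8*x)) = ∫ u in Ioi b, Real.exp (-u^2/(8*x)) := by
    simpa using integral_Ioi_comp_add_right (fun u => Real.exp (-u^2/(8*x))) 0 b
  have h2 : ∫ u in Ioi b, Real.exp (-u^2/(8*x)) = k * ∫ v in Ioi (b/k), Real.exp (-v^2) := by
    have hcomp := integral_comp_mul_left_Ioi (fun u => Real.exp (-u^2/(8*x))) (b/k) hk
    have heq : ∀ v : ℝ, Real.exp (-(k*v)^2/(8*x)) = Real.exp (-v^2) := by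
      intro v
      rw [mul_pow, hk2]
      congr 1
      field_simp
    simp only [heq] at hcomp
    rw [mul_div_cancel₀ _ hk.ne'] at hcomp
    rw [hcomp, smul_eq_mul]
    field_simp
  rw [h1, h2, gaussian_tail]
  -- identify the erf argument
  have hxk : Real.sqrt (x/8) * k = x := by
    rw [hkdef, ← Real.sqrt_mul (by positivity), show x/8*(8*x) = x^2 by ring]
    exact Real.sqrt_sq hx.le
  have hm : (2*(l:ℝ)+1) * Real.sqrt (x/8) = -(b/k) := by
    rw [show -(b/k) = -b/k from (neg_div _ _).symm, eq_div_iff hk.ne', hbdef, neg_mul, neg_neg,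
      mul_assoc, hxk]
  have hodd : ∫ s in (0:ℝ)..(b/k), Real.exp (-s^2)
      = -∫ s in (0:ℝ)..((2*(l:ℝ)+1) * Real.sqrt (x/8)), Real.exp (-s^2) := by
    rw [hm]
    have := intervalIntegral.integral_comp_neg (a := (0:ℝ)) (b := -(b/k))
      (fun s => Real.exp (-s^2))
    simp only [neg_neg, neg_zero, neg_sq] at this ⊢
    rw [this, intervalIntegral.integral_symm]
  rw [hodd]
  -- now pure arithmetic
  unfold erf
  have hpi : (0:ℝ) < Real.pi := Real.pi_pos
  have hsp : Real.sqrt Real.pi > 0 := Real.sqrt_pos.mpr hpi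
  have hsp2 : Real.sqrt Real.pi * Real.sqrt Real.pi = Real.pi := Real.mul_self_sqrt hpi.le
  have hconst : Real.sqrt (Real.pi/(2*x)) * k = 2 * Real.sqrt Real.pi := by
    rw [hkdef, ← Real.sqrt_mul (by positivity), show Real.pi/(2*x)*(8*x) = 4*Real.pi by field_simp; ring]
    rw [show (4:ℝ)*Real.pi = 2^2 * Real.pi by norm_num, Real.sqrt_mul (by norm_num),
      Real.sqrt_sq (by norm_num)]
  set G : ℝ := ∫ s in (0:ℝ)..((2*(l:ℝ)+1) * Real.sqrt (x/8)), Real.exp (-s^2)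
  have expand : (1/(2*Real.pi)) * (Real.sqrt (Real.pi/(2*x)) * (k * (Real.sqrt Real.pi/2 - -G)))
      = (Real.sqrt (Real.pi/(2*x)) * k) * (Real.sqrt Real.pi/2 + G) / (2*Real.pi) := by ring
  rw [expand, hconst]
  field_simp
  linear_combination (Real.sqrt Real.pi + 2*G) * hsp2

/-- Evaluation of the contour integral
`-(1/(2πi)) ∫_{C_-} e^{x s(2s-1-2l)} ds/s` over a vertical line to the left of the
origin: it equals `(1/2)[1 + erf((2l+1)√(x/8))]`. -/
theorem contour_integral_erf (x : ℝ) (hx : 0 < x) (l : ℤ) (c : ℝ) (hc : c < 0) :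
    -(1 / (2 * (Real.pi : ℂ))) * ∫ τ : ℝ,
        Complex.exp ((x : ℂ) * ((c : ℂ) + (τ : ℂ) * Complex.I) *
          (2 * ((c : ℂ) + (τ : ℂ) * Complex.I) - 1 - 2 * (l : ℂ))) /
        ((c : ℂ) + (τ : ℂ) * Complex.I)
      = ((1 / 2 * (1 + erf ((2 * (l : ℝ) + 1) * Real.sqrt (x / 8))) : ℝ) : ℂ) := by
  have hb : ∀ τ : ℝ, ((c:ℂ) + (τ:ℂ) * Complex.I).re = c := by intro τ; simp
  -- Step 1 : Laplace representation of 1/s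
  have step1 : ∀ τ : ℝ,
      Complex.exp ((x : ℂ) * ((c : ℂ) + (τ : ℂ) * Complex.I) *
          (2 * ((c : ℂ) + (τ : ℂ) * Complex.I) - 1 - 2 * (l : ℂ))) /
        ((c : ℂ) + (τ : ℂ) * Complex.I)
      = -∫ t in Ioi (0:ℝ),
          Complex.exp (2*(x:ℂ) * ((c:ℂ) + (τ:ℂ) * Complex.I)^2
            + ((t:ℂ) + ((-(2*(l:ℝ)+1)*x : ℝ):ℂ)) * ((c:ℂ) + (τ:ℂ) * Complex.I)) := by
    intro τ
    have hlap := laplace_one (s := (c:ℂ) + (τ:ℂ) * Complex.I) (by rw [hb]; exact hc)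
    have hinv : ((c:ℂ) + (τ:ℂ) * Complex.I)⁻¹
        = -∫ t in Ioi (0:ℝ), Complex.exp ((t:ℂ) * ((c:ℂ) + (τ:ℂ) * Complex.I)) := by
      rw [hlap, neg_neg]
    rw [div_eq_mul_inv, hinv, mul_neg, ← integral_const_mul]
    have heq : ∀ t : ℝ,
        Complex.exp ((x : ℂ) * ((c : ℂ) + (τ : ℂ) * Complex.I) *
            (2 * ((c : ℂ) + (τ : ℂ) * Complex.I) - 1 - 2 * (l : ℂ)))
          * Complex.exp ((t:ℂ) * ((c:ℂ) + (τ:ℂ) * Complex.I))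
        = Complex.exp (2*(x:ℂ) * ((c:ℂ) + (τ:ℂ) * Complex.I)^2
            + ((t:ℂ) + ((-(2*(l:ℝ)+1)*x : ℝ):ℂ)) * ((c:ℂ) + (τ:ℂ) * Complex.I)) := by
      intro t
      rw [← Complex.exp_add]
      congr 1
      push_cast
      ring
    simp_rw [heq]
  simp_rw [step1]
  rw [integral_neg, neg_mul_neg]
  -- Step 2 : Fubini
  have hexpt : Integrable (fun t : ℝ => Real.exp (c*t)) (volume.restrict (Ioi 0)) := by
    have h := exp_neg_integrableOn_Ioi 0 (show (0:ℝ) < -c by linarith)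
    have h' : IntegrableOn (fun t : ℝ => Real.exp (c*t)) (Ioi 0) := by simpa [neg_mul, neg_neg] using h
    exact h'
  have hre : ∀ τ t : ℝ,
      (2*(x:ℂ) * ((c:ℂ) + (τ:ℂ) * Complex.I)^2
        + ((t:ℂ) + ((-(2*(l:ℝ)+1)*x : ℝ):ℂ)) * ((c:ℂ) + (τ:ℂ) * Complex.I)).re
      = (2*x*c^2 + (-(2*(l:ℝ)+1)*x)*c) + (-(2*x)*τ^2 + c*t) := by
    intro τ t
    simp [pow_two, Complex.mul_re, Complex.add_re, Complex.mul_im, Complex.add_im]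
    ring
  have hcont : Continuous (fun p : ℝ × ℝ =>
      Complex.exp (2*(x:ℂ) * ((c:ℂ) + (p.1:ℂ) * Complex.I)^2
        + ((p.2:ℂ) + ((-(2*(l:ℝ)+1)*x : ℝ):ℂ)) * ((c:ℂ) + (p.1:ℂ) * Complex.I))) := by
    fun_prop
  have hInt : Integrable (Function.uncurry (fun τ t : ℝ =>
      Complex.exp (2*(x:ℂ) * ((c:ℂ) + (τ:ℂ) * Complex.I)^2
        + ((t:ℂ) + ((-(2*(l:ℝ)+1)*x : ℝ):ℂ)) * ((c:ℂ) + (τ:ℂ) * Complex.I))))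
      ((volume : Measure ℝ).prod ((volume : Measure ℝ).restrict (Ioi 0))) := by
    refine Integrable.mono'
      (((integrable_exp_neg_mul_sq (show (0:ℝ) < 2*x by positivity)).mul_prod hexpt).const_mul
        (Real.exp (2*x*c^2 + (-(2*(l:ℝ)+1)*x)*c))) hcont.aestronglyMeasurable ?_
    filter_upwards with p
    have : ‖Complex.exp (2*(x:ℂ) * ((c:ℂ) + (p.1:ℂ) * Complex.I)^2
        + ((p.2:ℂ) + ((-(2*(l:ℝ)+1)*x : ℝ):ℂ)) * ((c:ℂ) + (p.1:ℂ) * Complex.I))‖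
        = Real.exp (2*x*c^2 + (-(2*(l:ℝ)+1)*x)*c)
          * (Real.exp (-(2*x)*p.1^2) * Real.exp (c*p.2)) := by
      rw [Complex.norm_exp, hre p.1 p.2]
      simp only [Real.exp_add]
    exact le_of_eq this
  rw [integral_integral_swap hInt]
  -- Step 3 : evaluate the inner Gaussian integral
  have inner : ∀ t : ℝ, (∫ τ : ℝ,
      Complex.exp (2*(x:ℂ) * ((c:ℂ) + (τ:ℂ) * Complex.I)^2
        + ((t:ℂ) + ((-(2*(l:ℝ)+1)*x : ℝ):ℂ)) * ((c:ℂ) + (τ:ℂ) * Complex.I)))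
      = ((Real.sqrt (Real.pi/(2*x))
          * Real.exp (-(t + (-(2*(l:ℝ)+1)*x))^2/(8*x)) : ℝ) : ℂ) := by
    intro t
    rw [vertical_gaussian hx c ((t:ℂ) + ((-(2*(l:ℝ)+1)*x : ℝ):ℂ)),
      show -((t:ℂ) + ((-(2*(l:ℝ)+1)*x : ℝ):ℂ))^2 / (8*(x:ℂ))
        = ((-(t + (-(2*(l:ℝ)+1)*x))^2/(8*x) : ℝ) : ℂ) by push_cast; ring,
      ← Complex.ofReal_exp, ← Complex.ofReal_mul]
  simp_rw [inner]
  rw [show (∫ t in Ioi (0:ℝ), ((Real.sqrt (Real.pi/(2*x))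
        * Real.exp (-(t + (-(2*(l:ℝ)+1)*x))^2/(8*x)) : ℝ) : ℂ))
      = (((∫ t in Ioi (0:ℝ), Real.sqrt (Real.pi/(2*x))
        * Real.exp (-(t + (-(2*(l:ℝ)+1)*x))^2/(8*x)) : ℝ)) : ℂ)
      from integral_ofReal,
    show (1 / (2 * (Real.pi:ℂ))) = (((1/(2*Real.pi) : ℝ)) : ℂ) by push_cast; ring,
    ← Complex.ofReal_mul]
  exact_mod_cast congrArg (fun r : ℝ => (r : ℂ)) (real_final x hx l)
end

section
/- For every α > 0, ∫₀¹ erf( √(α/(8t)) ) dt = (1 + α/4) · erf( √(α/8) ) − α/4 + √(α/(2π)) · e^{−α/8}. -/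
open MeasureTheory Filter Topology

/-- `c(α) = ∫_0^1 erf(√(α/(8t))) dt`. -/
noncomputable def cFun (α : ℝ) : ℝ :=
  ∫ t in (0:ℝ)..1, erf (Real.sqrt (α / (8 * t)))

lemma hasDerivAt_erf (x : ℝ) :
    HasDerivAt erf (2 / Real.sqrt Real.pi * Real.exp (-x ^ 2)) x := by
  have hc : Continuous fun s : ℝ => Real.exp (-s ^ 2) := by continuity
  have h := intervalIntegral.integral_hasDerivAt_right
    (hc.intervalIntegrable 0 x)
    (hc.stronglyMeasurableAtFilter _ _)
    hc.continuousAt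
  exact h.const_mul (2 / Real.sqrt Real.pi)

lemma continuous_erf : Continuous erf :=
  continuous_iff_continuousAt.2 fun x => (hasDerivAt_erf x).continuousAt

lemma gauss_integrableOn : IntegrableOn (fun s : ℝ => Real.exp (-s ^ 2)) (Set.Ioi 0) := by
  have := (integrable_exp_neg_mul_sq (b := (1:ℝ)) one_pos).integrableOn (s := Set.Ioi 0)
  simpa using this

lemma gauss_Ioi : ∫ s in Set.Ioi (0:ℝ), Real.exp (-s ^ 2) = Real.sqrt Real.pi / 2 := by
  have h := integral_gaussian_Ioi 1
  simpa using h

lemma erf_nonneg {x : ℝ} (hx : 0 ≤ x) : 0 ≤ erf x := by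
  have h : 0 ≤ ∫ s in (0:ℝ)..x, Real.exp (-s ^ 2) :=
    intervalIntegral.integral_nonneg hx fun s _ => (Real.exp_pos _).le
  have h2 : (0:ℝ) ≤ 2 / Real.sqrt Real.pi := by positivity
  exact mul_nonneg h2 h

lemma erf_le_one {x : ℝ} (hx : 0 ≤ x) : erf x ≤ 1 := by
  have h1 : ∫ s in (0:ℝ)..x, Real.exp (-s ^ 2)
      ≤ ∫ s in Set.Ioi (0:ℝ), Real.exp (-s ^ 2) := by
    rw [intervalIntegral.integral_of_le hx]
    refine setIntegral_mono_set gauss_integrableOn ?_ ?_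
    · filter_upwards with s using (Real.exp_pos _).le
    · exact (Set.Ioc_subset_Ioi_self).eventuallyLE
  rw [gauss_Ioi] at h1
  have hπ : 0 < Real.sqrt Real.pi := Real.sqrt_pos.2 Real.pi_pos
  have := mul_le_mul_of_nonneg_left h1 (by positivity : (0:ℝ) ≤ 2 / Real.sqrt Real.pi)
  calc erf x ≤ 2 / Real.sqrt Real.pi * (Real.sqrt Real.pi / 2) := this
    _ = 1 := by field_simp

lemma tendsto_erf_atTop : Tendsto erf atTop (𝓝 1) := by
  have h := intervalIntegral_tendsto_integral_Ioi (0:ℝ) gauss_integrableOn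
    (tendsto_id (α := ℝ))
  rw [gauss_Ioi] at h
  have h2 := h.const_mul (2 / Real.sqrt Real.pi)
  have hπ : (0:ℝ) < Real.sqrt Real.pi := Real.sqrt_pos.2 Real.pi_pos
  have h3 : 2 / Real.sqrt Real.pi * (Real.sqrt Real.pi / 2) = 1 := by field_simp
  rw [h3] at h2
  exact h2

/-- Closed form for `c(α)`:
`∫_0^1 erf(√(α/(8t))) dt = (1 + α/4) erf(√(α/8)) - α/4 + √(α/(2π)) e^{-α/8}`. -/
theorem cFun_closed_form (α : ℝ) (hα : 0 < α) :
    cFun α = (1 + α / 4) * erf (Real.sqrt (α / 8)) - α / 4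
      + Real.sqrt (α / (2 * Real.pi)) * Real.exp (-α / 8) := by
  set a : ℝ := α / 8 with ha_def
  have ha : 0 < a := by positivity
  have hπ : (0:ℝ) < Real.sqrt Real.pi := Real.sqrt_pos.2 Real.pi_pos
  set F : ℝ → ℝ := fun t =>
    t * erf (Real.sqrt a * (Real.sqrt t)⁻¹)
      + 2 / Real.sqrt Real.pi * (Real.sqrt a * Real.sqrt t * Real.exp (-(a / t)))
      + 2 * a * erf (Real.sqrt a * (Real.sqrt t)⁻¹) with hF_def
  -- the key derivative computation
  have key : ∀ t : ℝ, 0 < t →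
      HasDerivAt F (erf (Real.sqrt (α / (8 * t)))) t := by
    intro t ht
    have hst : 0 < Real.sqrt t := Real.sqrt_pos.2 ht
    have hsqrt : HasDerivAt Real.sqrt (1 / (2 * Real.sqrt t)) t :=
      Real.hasDerivAt_sqrt ht.ne'
    have hinv : HasDerivAt (fun s : ℝ => (Real.sqrt s)⁻¹)
        (-(1 / (2 * Real.sqrt t)) / Real.sqrt t ^ 2) t := hsqrt.inv hst.ne'
    have hu : HasDerivAt (fun s : ℝ => Real.sqrt a * (Real.sqrt s)⁻¹)
        (Real.sqrt a * (-(1 / (2 * Real.sqrt t)) / Real.sqrt t ^ 2)) t :=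
      hinv.const_mul _
    have hE : HasDerivAt (fun s : ℝ => erf (Real.sqrt a * (Real.sqrt s)⁻¹))
        (2 / Real.sqrt Real.pi * Real.exp (-(Real.sqrt a * (Real.sqrt t)⁻¹) ^ 2)
          * (Real.sqrt a * (-(1 / (2 * Real.sqrt t)) / Real.sqrt t ^ 2))) t :=
      (hasDerivAt_erf _).comp t hu
    have hdiv : HasDerivAt (fun s : ℝ => -(a / s)) (-(a * -(t ^ 2)⁻¹)) t := by
      have h0 : HasDerivAt (fun s : ℝ => -(a * s⁻¹)) (-(a * -(t ^ 2)⁻¹)) t :=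
        ((hasDerivAt_inv ht.ne').const_mul a).neg
      simpa [div_eq_mul_inv] using h0
    have hexp : HasDerivAt (fun s : ℝ => Real.exp (-(a / s)))
        (Real.exp (-(a / t)) * -(a * -(t ^ 2)⁻¹)) t := by
      simpa [mul_comm] using hdiv.exp
    have hG : HasDerivAt
        (fun s : ℝ => Real.sqrt a * Real.sqrt s * Real.exp (-(a / s)))
        ((Real.sqrt a * (1 / (2 * Real.sqrt t))) * Real.exp (-(a / t))
          + Real.sqrt a * Real.sqrt t * (Real.exp (-(a / t)) * -(a * -(t ^ 2)⁻¹))) t :=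
      (hsqrt.const_mul (Real.sqrt a)).mul hexp
    have hFd : HasDerivAt F
        ((1 * erf (Real.sqrt a * (Real.sqrt t)⁻¹)
            + t * (2 / Real.sqrt Real.pi * Real.exp (-(Real.sqrt a * (Real.sqrt t)⁻¹) ^ 2)
              * (Real.sqrt a * (-(1 / (2 * Real.sqrt t)) / Real.sqrt t ^ 2))))
          + 2 / Real.sqrt Real.pi
            * ((Real.sqrt a * (1 / (2 * Real.sqrt t))) * Real.exp (-(a / t))
              + Real.sqrt a * Real.sqrt t * (Real.exp (-(a / t)) * -(a * -(t ^ 2)⁻¹)))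
          + 2 * a * (2 / Real.sqrt Real.pi * Real.exp (-(Real.sqrt a * (Real.sqrt t)⁻¹) ^ 2)
            * (Real.sqrt a * (-(1 / (2 * Real.sqrt t)) / Real.sqrt t ^ 2)))) t :=
      (((hasDerivAt_id t).mul hE).add (hG.const_mul _)).add (hE.const_mul _)
    have harg : Real.sqrt (α / (8 * t)) = Real.sqrt a * (Real.sqrt t)⁻¹ := by
      rw [show α / (8 * t) = a / t by rw [ha_def, div_div],
        Real.sqrt_div ha.le, div_eq_mul_inv]
    have hsq : (Real.sqrt a * (Real.sqrt t)⁻¹) ^ 2 = a / t := by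
      rw [mul_pow, ← Real.sqrt_inv, Real.sq_sqrt ha.le,
        Real.sq_sqrt (inv_nonneg.2 ht.le), div_eq_mul_inv]
    rw [harg]
    convert hFd using 1
    rw [hsq]
    set X := Real.exp (-(a / t)) with hX
    obtain ⟨u, hu0, hut⟩ : ∃ u : ℝ, 0 < u ∧ u ^ 2 = t := ⟨Real.sqrt t, hst, Real.sq_sqrt ht.le⟩
    obtain ⟨b, hb0, hba⟩ : ∃ b : ℝ, 0 < b ∧ b ^ 2 = a :=
      ⟨Real.sqrt a, Real.sqrt_pos.2 ha, Real.sq_sqrt ha.le⟩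
    have h1 : Real.sqrt t = u := by rw [← hut, Real.sqrt_sq hu0.le]
    have h2 : Real.sqrt a = b := by rw [← hba, Real.sqrt_sq hb0.le]
    rw [h1, h2, ← hut, ← hba]
    field_simp
    ring
  -- integrability of the integrand
  have hmeas : Measurable fun t : ℝ => erf (Real.sqrt (α / (8 * t))) :=
    continuous_erf.measurable.comp
      ((measurable_const.div (measurable_id.const_mul 8)).sqrt)
  have hint : IntervalIntegrable (fun t : ℝ => erf (Real.sqrt (α / (8 * t))))
      volume 0 1 := by
    rw [intervalIntegrable_iff_integrableOn_Ioc_of_le zero_le_one]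
    refine Integrable.mono' (g := fun _ => (1:ℝ))
      (integrableOn_const measure_Ioc_lt_top.ne)
      hmeas.aestronglyMeasurable ?_
    filter_upwards with t
    rw [Real.norm_eq_abs, abs_le]
    constructor
    · linarith [erf_nonneg (Real.sqrt_nonneg (α / (8 * t)))]
    · exact erf_le_one (Real.sqrt_nonneg _)
  -- limit of F at 0⁺
  have hsq0 : Tendsto (fun t : ℝ => Real.sqrt t) (𝓝[>] 0) (𝓝 0) := by
    have := (Real.continuous_sqrt.tendsto 0).mono_left (nhdsWithin_le_nhds (s := Set.Ioi 0))
    simpa using this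
  have hsq0' : Tendsto (fun t : ℝ => Real.sqrt t) (𝓝[>] 0) (𝓝[>] 0) := by
    refine tendsto_nhdsWithin_of_tendsto_nhds_of_eventually_within _ hsq0 ?_
    filter_upwards [self_mem_nhdsWithin] with t (ht : 0 < t)
    exact Real.sqrt_pos.2 ht
  have hu_top : Tendsto (fun t : ℝ => Real.sqrt a * (Real.sqrt t)⁻¹) (𝓝[>] 0) atTop := by
    have h1 : Tendsto (fun t : ℝ => (Real.sqrt t)⁻¹) (𝓝[>] 0) atTop :=
      tendsto_inv_nhdsGT_zero.comp hsq0'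
    exact h1.const_mul_atTop (Real.sqrt_pos.2 ha)
  have herf1 : Tendsto (fun t : ℝ => erf (Real.sqrt a * (Real.sqrt t)⁻¹)) (𝓝[>] 0)
      (𝓝 1) := tendsto_erf_atTop.comp hu_top
  have hexp0 : Tendsto (fun t : ℝ => Real.exp (-(a / t))) (𝓝[>] 0) (𝓝 0) := by
    apply Real.tendsto_exp_atBot.comp
    apply tendsto_neg_atTop_atBot.comp
    have h1 : Tendsto (fun t : ℝ => t⁻¹) (𝓝[>] 0) atTop := tendsto_inv_nhdsGT_zero
    have := h1.const_mul_atTop ha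
    exact Tendsto.congr (fun t => (div_eq_mul_inv a t).symm) this
  have hts : Tendsto (fun t : ℝ => t) (𝓝[>] 0) (𝓝 0) :=
    tendsto_id.mono_left nhdsWithin_le_nhds
  have hF0 : Tendsto F (𝓝[>] 0) (𝓝 (2 * a)) := by
    have hB : Tendsto
        (fun t : ℝ => 2 / Real.sqrt Real.pi
          * (Real.sqrt a * Real.sqrt t * Real.exp (-(a / t)))) (𝓝[>] 0)
        (𝓝 (2 / Real.sqrt Real.pi * (Real.sqrt a * 0 * 0))) :=
      ((tendsto_const_nhds.mul hsq0).mul hexp0).const_mul _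
    have h := ((hts.mul herf1).add hB).add (herf1.const_mul (2 * a))
    have : (0:ℝ) * 1 + 2 / Real.sqrt Real.pi * (Real.sqrt a * 0 * 0) + 2 * a * 1
        = 2 * a := by ring
    rw [this] at h
    exact h
  -- limit of F at 1⁻
  have hF1 : Tendsto F (𝓝[<] 1) (𝓝 (F 1)) :=
    (key 1 one_pos).continuousAt.continuousWithinAt
  -- apply the FTC
  have hFTC := intervalIntegral.integral_eq_sub_of_hasDerivAt_of_tendsto
    (f := F) (f' := fun t => erf (Real.sqrt (α / (8 * t)))) zero_lt_one
    (fun x hx => key x hx.1) hint hF0 hF1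
  have hcf : cFun α = F 1 - 2 * a := hFTC
  -- compute F 1 and finish
  have hF1val : F 1 = erf (Real.sqrt a)
      + 2 / Real.sqrt Real.pi * (Real.sqrt a * Real.exp (-(a)))
      + 2 * a * erf (Real.sqrt a) := by
    simp [hF_def, Real.sqrt_one]
  have hsqrt_eq : Real.sqrt (α / (2 * Real.pi))
      = 2 / Real.sqrt Real.pi * Real.sqrt a := by
    rw [show α / (2 * Real.pi) = (2 / Real.sqrt Real.pi) ^ 2 * a by
      rw [div_pow, Real.sq_sqrt Real.pi_pos.le, ha_def]
      field_simp
      ring]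
    rw [Real.sqrt_mul (by positivity), Real.sqrt_sq (by positivity)]
  rw [hcf, hF1val, hsqrt_eq]
  rw [show Real.sqrt (α / 8) = Real.sqrt a by rw [ha_def]]
  rw [show (-α / 8 : ℝ) = -(a) by rw [ha_def]; ring]
  rw [ha_def]
  ring
end

section
/- Let s(α) := ∫₀¹ (α/(8πt)) Σ_{k∈ℤ} ( ∫_{2k−1}^{2k+1} e^{−αx²/(8t)} dx )² dt for α > 0. Then lim_{α → 0⁺} s(α)/√α = 1/√π; that is, s(α) ∼ √(α/π) as α → 0⁺. -/
open MeasureTheory Filter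

/-- `s(α) = ∫_0^1 (α/(8πt)) Σ_{k∈ℤ} (∫_{2k-1}^{2k+1} e^{-αx²/(8t)} dx)² dt`. -/
noncomputable def sFun (α : ℝ) : ℝ :=
  ∫ t in (0:ℝ)..1, (α / (8 * Real.pi * t)) *
    ∑' k : ℤ, (∫ x in (2 * (k : ℝ) - 1)..(2 * (k : ℝ) + 1),
      Real.exp (-(α * x ^ 2) / (8 * t))) ^ 2

section Aux

open Set Real

/-- The basic inner integral. -/
noncomputable def gk (b : ℝ) (k : ℤ) : ℝ :=
  ∫ x in (2 * (k : ℝ) - 1)..(2 * (k : ℝ) + 1), Real.exp (-b * x ^ 2)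

/-- The theta-like sum of squares. -/
noncomputable def SS (b : ℝ) : ℝ := ∑' k : ℤ, gk b k ^ 2

lemma contExp (b : ℝ) : Continuous fun x : ℝ => Real.exp (-b * x ^ 2) := by
  fun_prop

lemma gk_nonneg (b : ℝ) (k : ℤ) : 0 ≤ gk b k :=
  intervalIntegral.integral_nonneg (by linarith) fun x _ => (Real.exp_pos _).le

lemma SS_nonneg (b : ℝ) : 0 ≤ SS b := tsum_nonneg fun k => sq_nonneg _

lemma gk_eq_Ioc (b : ℝ) (k : ℤ) :
    gk b k = ∫ x in Ioc (2 * (k : ℝ) - 1) (2 * (k : ℝ) + 1), Real.exp (-b * x ^ 2) :=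
  intervalIntegral.integral_of_le (by linarith)

lemma gk_le_two {b : ℝ} (hb : 0 ≤ b) (k : ℤ) : gk b k ≤ 2 := by
  have h : gk b k ≤ ∫ _x in (2 * (k : ℝ) - 1)..(2 * (k : ℝ) + 1), (1 : ℝ) := by
    apply intervalIntegral.integral_mono_on (by linarith)
      ((contExp b).intervalIntegrable _ _) intervalIntegrable_const
    intro x _
    rw [← Real.exp_zero]
    exact Real.exp_le_exp.mpr (by nlinarith [sq_nonneg x])
  simpa using h.trans_eq (by simp; ring)

lemma gk_even (b : ℝ) (k : ℤ) : gk b (-k) = gk b k := by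
  unfold gk
  have h1 : (2 * ((-k : ℤ) : ℝ) - 1) = -(2 * (k : ℝ) + 1) := by push_cast; ring
  have h2 : (2 * ((-k : ℤ) : ℝ) + 1) = -(2 * (k : ℝ) - 1) := by push_cast; ring
  rw [h1, h2, ← intervalIntegral.integral_comp_neg (fun x => Real.exp (-b * x ^ 2))]
  simp

lemma gk_le_exp {b : ℝ} (hb : 0 ≤ b) (n : ℕ) :
    gk b ((n : ℤ) + 1) ≤ 2 * Real.exp (-b * (2 * (n : ℝ) + 1) ^ 2) := by
  have h : gk b ((n : ℤ) + 1) ≤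
      ∫ _x in (2 * (((n : ℤ) + 1 : ℤ) : ℝ) - 1)..(2 * (((n : ℤ) + 1 : ℤ) : ℝ) + 1),
        Real.exp (-b * (2 * (n : ℝ) + 1) ^ 2) := by
    apply intervalIntegral.integral_mono_on (by push_cast; linarith)
      ((contExp b).intervalIntegrable _ _) intervalIntegrable_const
    intro x hx
    have hx1 : 2 * (n : ℝ) + 1 ≤ x := by
      have := hx.1; push_cast at this ⊢; linarith
    have hn : (0:ℝ) ≤ 2 * (n : ℝ) + 1 := by positivity
    have key : (2 * (n : ℝ) + 1) ^ 2 ≤ x ^ 2 := by nlinarith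
    exact Real.exp_le_exp.mpr (by nlinarith [mul_nonneg hb (sub_nonneg.2 key)])
  refine h.trans_eq ?_
  rw [intervalIntegral.integral_const, smul_eq_mul]
  push_cast
  ring

lemma exp_le_gk {b : ℝ} (hb : 0 ≤ b) (n : ℕ) :
    2 * Real.exp (-b * (2 * (n : ℝ) + 3) ^ 2) ≤ gk b ((n : ℤ) + 1) := by
  have h : (∫ _x in (2 * (((n : ℤ) + 1 : ℤ) : ℝ) - 1)..(2 * (((n : ℤ) + 1 : ℤ) : ℝ) + 1),
      Real.exp (-b * (2 * (n : ℝ) + 3) ^ 2)) ≤ gk b ((n : ℤ) + 1) := by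
    apply intervalIntegral.integral_mono_on (by push_cast; linarith)
      intervalIntegrable_const ((contExp b).intervalIntegrable _ _)
    intro x hx
    have hx1 : 2 * (n : ℝ) + 1 ≤ x := by
      have := hx.1; push_cast at this ⊢; linarith
    have hx2 : x ≤ 2 * (n : ℝ) + 3 := by
      have := hx.2; push_cast at this ⊢; linarith
    have key : x ^ 2 ≤ (2 * (n : ℝ) + 3) ^ 2 := by nlinarith
    exact Real.exp_le_exp.mpr (by nlinarith [mul_nonneg hb (sub_nonneg.2 key)])
  refine le_trans (le_of_eq ?_) h
  rw [intervalIntegral.integral_const, smul_eq_mul]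
  push_cast
  ring

lemma union_Ioc (c : ℝ) : (⋃ n : ℕ, Ioc (c + 2 * (n : ℝ)) (c + 2 * (n : ℝ) + 2)) = Ioi c := by
  ext x
  simp only [mem_iUnion, mem_Ioc, mem_Ioi]
  constructor
  · rintro ⟨n, h1, _⟩
    have : (0:ℝ) ≤ 2 * (n : ℝ) := by positivity
    linarith
  · intro hx
    have hpos : 0 < (x - c) / 2 := by linarith
    have hceil : 0 < ⌈(x - c) / 2⌉ := Int.ceil_pos.mpr hpos
    refine ⟨(⌈(x - c) / 2⌉ - 1).toNat, ?_, ?_⟩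
    · have hcast : (((⌈(x - c) / 2⌉ - 1).toNat : ℕ) : ℝ) = (⌈(x - c) / 2⌉ : ℝ) - 1 := by
        have := Int.toNat_of_nonneg (by omega : (0:ℤ) ≤ ⌈(x - c) / 2⌉ - 1)
        exact_mod_cast congrArg (fun z : ℤ => (z : ℝ)) this
      rw [hcast]
      have := Int.ceil_lt_add_one ((x - c) / 2)
      linarith
    · have hcast : (((⌈(x - c) / 2⌉ - 1).toNat : ℕ) : ℝ) = (⌈(x - c) / 2⌉ : ℝ) - 1 := by
        have := Int.toNat_of_nonneg (by omega : (0:ℤ) ≤ ⌈(x - c) / 2⌉ - 1)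
        exact_mod_cast congrArg (fun z : ℤ => (z : ℝ)) this
      rw [hcast]
      have := Int.le_ceil ((x - c) / 2)
      linarith

lemma hasSum_ray {b : ℝ} (hb : 0 < b) (c : ℝ) :
    HasSum (fun n : ℕ => ∫ x in Ioc (c + 2 * (n : ℝ)) (c + 2 * (n : ℝ) + 2),
        Real.exp (-b * x ^ 2))
      (∫ x in Ioi c, Real.exp (-b * x ^ 2)) := by
  have h := hasSum_integral_iUnion (μ := volume)
      (f := fun x : ℝ => Real.exp (-b * x ^ 2))
      (s := fun n : ℕ => Ioc (c + 2 * (n : ℝ)) (c + 2 * (n : ℝ) + 2))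
      (fun n => measurableSet_Ioc) ?_ ?_
  · rwa [union_Ioc] at h
  · rw [pairwise_disjoint_on]
    intro m n hmn
    rw [Set.Ioc_disjoint_Ioc]
    have : (m : ℝ) + 1 ≤ (n : ℝ) := by exact_mod_cast hmn
    refine le_trans (min_le_left _ _) (le_trans ?_ (le_max_right _ _))
    linarith
  · exact (integrable_exp_neg_mul_sq hb).integrableOn

lemma gk_succ_Ioc {b : ℝ} (n : ℕ) :
    gk b ((n : ℤ) + 1)
      = ∫ x in Ioc ((1:ℝ) + 2 * (n : ℝ)) ((1:ℝ) + 2 * (n : ℝ) + 2), Real.exp (-b * x ^ 2) := by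
  rw [gk_eq_Ioc]
  congr 1 <;> push_cast <;> ring

lemma hasSum_tail {b : ℝ} (hb : 0 < b) :
    HasSum (fun n : ℕ => gk b ((n : ℤ) + 1)) (∫ x in Ioi (1:ℝ), Real.exp (-b * x ^ 2)) := by
  have hfun : (fun n : ℕ => gk b ((n : ℤ) + 1))
      = fun n : ℕ => ∫ x in Set.Ioc ((1:ℝ) + 2 * (n : ℝ)) ((1:ℝ) + 2 * (n : ℝ) + 2),
          Real.exp (-b * x ^ 2) := funext fun n => gk_succ_Ioc n
  rw [hfun]
  exact hasSum_ray hb 1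

lemma sq_step_up {b : ℝ} (hb : 0 < b) (n : ℕ) :
    gk b ((n : ℤ) + 1) ^ 2
      ≤ 2 * ∫ x in Ioc ((-1:ℝ) + 2 * (n : ℝ)) ((-1:ℝ) + 2 * (n : ℝ) + 2),
          Real.exp (-(2 * b) * x ^ 2) := by
  have h0 := gk_nonneg b ((n : ℤ) + 1)
  have h1 := gk_le_exp hb.le n
  have hexp : Real.exp (-b * (2 * (n : ℝ) + 1) ^ 2) ^ 2
      = Real.exp (-(2 * b) * (2 * (n : ℝ) + 1) ^ 2) := by
    rw [sq, ← Real.exp_add]; congr 1; ring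
  have hsq : gk b ((n : ℤ) + 1) ^ 2 ≤ 4 * Real.exp (-(2 * b) * (2 * (n : ℝ) + 1) ^ 2) := by
    nlinarith [Real.exp_pos (-b * (2 * (n : ℝ) + 1) ^ 2)]
  have hint : 2 * Real.exp (-(2 * b) * (2 * (n : ℝ) + 1) ^ 2)
      ≤ ∫ x in Ioc ((-1:ℝ) + 2 * (n : ℝ)) ((-1:ℝ) + 2 * (n : ℝ) + 2),
          Real.exp (-(2 * b) * x ^ 2) := by
    have hmono : ∫ x in Ioc ((-1:ℝ) + 2 * (n : ℝ)) ((-1:ℝ) + 2 * (n : ℝ) + 2),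
          Real.exp (-(2 * b) * (2 * (n : ℝ) + 1) ^ 2)
        ≤ ∫ x in Ioc ((-1:ℝ) + 2 * (n : ℝ)) ((-1:ℝ) + 2 * (n : ℝ) + 2),
          Real.exp (-(2 * b) * x ^ 2) := by
      apply setIntegral_mono_on (integrableOn_const measure_Ioc_lt_top.ne)
        ((integrable_exp_neg_mul_sq (by linarith : (0:ℝ) < 2 * b)).integrableOn) measurableSet_Ioc
      intro x hx
      have hx1 : -(2 * (n : ℝ) + 1) ≤ x := by have := hx.1; linarith
      have hx2 : x ≤ 2 * (n : ℝ) + 1 := by have := hx.2; linarith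
      have key : x ^ 2 ≤ (2 * (n : ℝ) + 1) ^ 2 := sq_le_sq' hx1 hx2
      exact Real.exp_le_exp.mpr (by nlinarith [sub_nonneg.2 key])
    rw [setIntegral_const, Real.volume_real_Ioc, show ((-1:ℝ) + 2 * (n : ℝ) + 2) - ((-1:ℝ) + 2 * (n : ℝ)) = 2 by ring,
      max_eq_left (by norm_num), smul_eq_mul] at hmono
    linarith
  linarith

lemma sq_step_down {b : ℝ} (hb : 0 < b) (n : ℕ) :
    2 * (∫ x in Ioc ((3:ℝ) + 2 * (n : ℝ)) ((3:ℝ) + 2 * (n : ℝ) + 2),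
          Real.exp (-(2 * b) * x ^ 2))
      ≤ gk b ((n : ℤ) + 1) ^ 2 := by
  have h0 := gk_nonneg b ((n : ℤ) + 1)
  have h1 := exp_le_gk hb.le n
  have hexp : Real.exp (-b * (2 * (n : ℝ) + 3) ^ 2) ^ 2
      = Real.exp (-(2 * b) * (2 * (n : ℝ) + 3) ^ 2) := by
    rw [sq, ← Real.exp_add]; congr 1; ring
  have hsq : 4 * Real.exp (-(2 * b) * (2 * (n : ℝ) + 3) ^ 2) ≤ gk b ((n : ℤ) + 1) ^ 2 := by
    nlinarith [Real.exp_pos (-b * (2 * (n : ℝ) + 3) ^ 2)]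
  have hint : (∫ x in Ioc ((3:ℝ) + 2 * (n : ℝ)) ((3:ℝ) + 2 * (n : ℝ) + 2),
          Real.exp (-(2 * b) * x ^ 2))
      ≤ 2 * Real.exp (-(2 * b) * (2 * (n : ℝ) + 3) ^ 2) := by
    have hmono : ∫ x in Ioc ((3:ℝ) + 2 * (n : ℝ)) ((3:ℝ) + 2 * (n : ℝ) + 2),
          Real.exp (-(2 * b) * x ^ 2)
        ≤ ∫ x in Ioc ((3:ℝ) + 2 * (n : ℝ)) ((3:ℝ) + 2 * (n : ℝ) + 2),
          Real.exp (-(2 * b) * (2 * (n : ℝ) + 3) ^ 2) := by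
      apply setIntegral_mono_on
        ((integrable_exp_neg_mul_sq (by linarith : (0:ℝ) < 2 * b)).integrableOn)
        (integrableOn_const measure_Ioc_lt_top.ne) measurableSet_Ioc
      intro x hx
      have hx1 : 2 * (n : ℝ) + 3 ≤ x := by have := hx.1; linarith
      have hxn : (0:ℝ) ≤ 2 * (n : ℝ) + 3 := by positivity
      have key : (2 * (n : ℝ) + 3) ^ 2 ≤ x ^ 2 := by nlinarith
      exact Real.exp_le_exp.mpr (by nlinarith [sub_nonneg.2 key])
    rw [setIntegral_const, Real.volume_real_Ioc, show ((3:ℝ) + 2 * (n : ℝ) + 2) - ((3:ℝ) + 2 * (n : ℝ)) = 2 by ring,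
      max_eq_left (by norm_num), smul_eq_mul] at hmono
    linarith
  linarith

lemma summable_tail_sq {b : ℝ} (hb : 0 < b) :
    Summable fun n : ℕ => gk b ((n : ℤ) + 1) ^ 2 := by
  have h2b : (0:ℝ) < 2 * b := by linarith
  exact Summable.of_nonneg_of_le (fun n => sq_nonneg _) (fun n => sq_step_up hb n)
    (((hasSum_ray h2b (-1)).summable).mul_left 2)

lemma summable_nat_sq {b : ℝ} (hb : 0 < b) :
    Summable fun n : ℕ => gk b (n : ℤ) ^ 2 := by
  apply (summable_nat_add_iff (f := fun n : ℕ => gk b (n : ℤ) ^ 2) 1).mp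
  exact (summable_tail_sq hb).congr fun n => by
    rw [show ((n : ℤ) + 1) = ((n + 1 : ℕ) : ℤ) by push_cast; ring]

lemma summable_neg_sq {b : ℝ} (hb : 0 < b) :
    Summable fun n : ℕ => gk b (-((n : ℤ) + 1)) ^ 2 :=
  (summable_tail_sq hb).congr fun n => by rw [← gk_even]

lemma summable_sq_int {b : ℝ} (hb : 0 < b) : Summable fun k : ℤ => gk b k ^ 2 :=
  Summable.of_nat_of_neg_add_one (f := fun k : ℤ => gk b k ^ 2) (summable_nat_sq hb) (summable_neg_sq hb)

/-- tail sum -/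
noncomputable def TT (b : ℝ) : ℝ := ∑' n : ℕ, gk b ((n : ℤ) + 1) ^ 2

lemma SS_eq {b : ℝ} (hb : 0 < b) : SS b = gk b 0 ^ 2 + 2 * TT b := by
  unfold SS TT
  rw [tsum_of_nat_of_neg_add_one (f := fun k : ℤ => gk b k ^ 2) (summable_nat_sq hb) (summable_neg_sq hb)]
  have h1 : ∑' n : ℕ, gk b (n : ℤ) ^ 2 = gk b 0 ^ 2 + ∑' n : ℕ, gk b ((n : ℤ) + 1) ^ 2 := by
    rw [Summable.tsum_eq_zero_add (summable_nat_sq hb)]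
    norm_num
  have h2 : ∑' n : ℕ, gk b (-((n : ℤ) + 1)) ^ 2 = ∑' n : ℕ, gk b ((n : ℤ) + 1) ^ 2 :=
    tsum_congr fun n => by rw [gk_even]
  rw [h1, h2]; ring

lemma TT_le {b : ℝ} (hb : 0 < b) :
    TT b ≤ 2 * ∫ x in Ioi (-1:ℝ), Real.exp (-(2 * b) * x ^ 2) := by
  have h2b : (0:ℝ) < 2 * b := by linarith
  have hray := hasSum_ray h2b (-1)
  calc TT b ≤ ∑' n : ℕ, 2 * ∫ x in Ioc ((-1:ℝ) + 2 * (n : ℝ)) ((-1:ℝ) + 2 * (n : ℝ) + 2),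
        Real.exp (-(2 * b) * x ^ 2) :=
      Summable.tsum_le_tsum (fun n => sq_step_up hb n) (summable_tail_sq hb) (hray.summable.mul_left 2)
    _ = 2 * ∑' n : ℕ, ∫ x in Ioc ((-1:ℝ) + 2 * (n : ℝ)) ((-1:ℝ) + 2 * (n : ℝ) + 2),
        Real.exp (-(2 * b) * x ^ 2) := tsum_mul_left
    _ = 2 * ∫ x in Ioi (-1:ℝ), Real.exp (-(2 * b) * x ^ 2) := by rw [hray.tsum_eq]

lemma TT_ge {b : ℝ} (hb : 0 < b) :
    2 * ∫ x in Ioi (3:ℝ), Real.exp (-(2 * b) * x ^ 2) ≤ TT b := by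
  have h2b : (0:ℝ) < 2 * b := by linarith
  have hray := hasSum_ray h2b 3
  calc 2 * ∫ x in Ioi (3:ℝ), Real.exp (-(2 * b) * x ^ 2)
      = 2 * ∑' n : ℕ, ∫ x in Ioc ((3:ℝ) + 2 * (n : ℝ)) ((3:ℝ) + 2 * (n : ℝ) + 2),
        Real.exp (-(2 * b) * x ^ 2) := by rw [hray.tsum_eq]
    _ = ∑' n : ℕ, 2 * ∫ x in Ioc ((3:ℝ) + 2 * (n : ℝ)) ((3:ℝ) + 2 * (n : ℝ) + 2),
        Real.exp (-(2 * b) * x ^ 2) := tsum_mul_left.symm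
    _ ≤ TT b :=
      Summable.tsum_le_tsum (fun n => sq_step_down hb n) (hray.summable.mul_left 2) (summable_tail_sq hb)

lemma int_Ioc_le {b c d : ℝ} (hb : 0 < b) (hcd : c ≤ d) :
    ∫ x in Ioc c d, Real.exp (-b * x ^ 2) ≤ d - c := by
  have h := setIntegral_mono_on ((integrable_exp_neg_mul_sq hb).integrableOn)
    (integrableOn_const measure_Ioc_lt_top.ne) measurableSet_Ioc
    (fun x _ => by
      rw [← Real.exp_zero]
      exact Real.exp_le_exp.mpr (by nlinarith [sq_nonneg x]) :
        ∀ x ∈ Ioc c d, Real.exp (-b * x ^ 2) ≤ (1:ℝ))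
  rwa [setIntegral_const, Real.volume_real_Ioc, max_eq_left (by linarith), smul_eq_mul,
    mul_one] at h

lemma int_Ioi_split {b c d : ℝ} (hb : 0 < b) (hcd : c ≤ d) :
    ∫ x in Ioi c, Real.exp (-b * x ^ 2)
      = (∫ x in Ioc c d, Real.exp (-b * x ^ 2)) + ∫ x in Ioi d, Real.exp (-b * x ^ 2) := by
  rw [← Set.Ioc_union_Ioi_eq_Ioi hcd,
    setIntegral_union Set.Ioc_disjoint_Ioi_same measurableSet_Ioi
      ((integrable_exp_neg_mul_sq hb).integrableOn) ((integrable_exp_neg_mul_sq hb).integrableOn)]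

lemma int_Ioi_nonneg (b c : ℝ) : 0 ≤ ∫ x in Ioi c, Real.exp (-b * x ^ 2) :=
  setIntegral_nonneg measurableSet_Ioi fun x _ => (Real.exp_pos _).le

lemma SS_upper {b : ℝ} (hb : 0 < b) :
    SS b ≤ 2 * Real.sqrt (π / (2 * b)) + 8 := by
  have h2b : (0:ℝ) < 2 * b := by linarith
  have h0 : gk b 0 ^ 2 ≤ 4 := by nlinarith [gk_le_two hb.le 0, gk_nonneg b 0]
  have hT := TT_le hb
  have hI : ∫ x in Ioi (-1:ℝ), Real.exp (-(2 * b) * x ^ 2)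
      ≤ 1 + Real.sqrt (π / (2 * b)) / 2 := by
    rw [int_Ioi_split h2b (by norm_num : (-1:ℝ) ≤ 0), integral_gaussian_Ioi]
    have := int_Ioc_le h2b (by norm_num : (-1:ℝ) ≤ 0)
    linarith
  rw [SS_eq hb]
  linarith

lemma SS_lower {b : ℝ} (hb : 0 < b) :
    2 * Real.sqrt (π / (2 * b)) - 12 ≤ SS b := by
  have h2b : (0:ℝ) < 2 * b := by linarith
  have hT := TT_ge hb
  have hI : Real.sqrt (π / (2 * b)) / 2 - 3
      ≤ ∫ x in Ioi (3:ℝ), Real.exp (-(2 * b) * x ^ 2) := by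
    have hsplit := int_Ioi_split h2b (by norm_num : (0:ℝ) ≤ 3)
    rw [integral_gaussian_Ioi] at hsplit
    have := int_Ioc_le h2b (by norm_num : (0:ℝ) ≤ 3)
    linarith
  rw [SS_eq hb]
  nlinarith [sq_nonneg (gk b 0)]

lemma sqrt_key {b : ℝ} (hb : 0 < b) :
    Real.sqrt b * Real.sqrt (π / (2 * b)) = Real.sqrt (2 * π) / 2 := by
  rw [← Real.sqrt_mul hb.le, show b * (π / (2 * b)) = (2 * π) / 4 by field_simp; ring,
    Real.sqrt_div (by positivity) 4,
    show Real.sqrt 4 = 2 by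
      rw [show (4:ℝ) = 2 ^ 2 by norm_num, Real.sqrt_sq (by norm_num : (0:ℝ) ≤ 2)]]

lemma claim1 :
    Tendsto (fun b : ℝ => Real.sqrt b * SS b) (nhdsWithin 0 (Ioi 0))
      (nhds (Real.sqrt (2 * π))) := by
  have hsq : Tendsto (fun b : ℝ => Real.sqrt b) (nhdsWithin 0 (Ioi 0)) (nhds 0) :=
    (Real.continuous_sqrt.tendsto' 0 0 Real.sqrt_zero).mono_left nhdsWithin_le_nhds
  have hlow : Tendsto (fun b : ℝ => Real.sqrt (2 * π) - 12 * Real.sqrt b)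
      (nhdsWithin 0 (Ioi 0)) (nhds (Real.sqrt (2 * π))) := by
    have := (hsq.const_mul (12:ℝ)).const_sub (Real.sqrt (2 * π))
    simpa using this
  have hhigh : Tendsto (fun b : ℝ => Real.sqrt (2 * π) + 8 * Real.sqrt b)
      (nhdsWithin 0 (Ioi 0)) (nhds (Real.sqrt (2 * π))) := by
    have := (hsq.const_mul (8:ℝ)).const_add (Real.sqrt (2 * π))
    simpa using this
  refine tendsto_of_tendsto_of_tendsto_of_le_of_le' hlow hhigh ?_ ?_
  · filter_upwards [self_mem_nhdsWithin] with b hb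
    have hb' : (0:ℝ) < b := hb
    have h := mul_le_mul_of_nonneg_left (SS_lower hb') (Real.sqrt_nonneg b)
    have hexp : Real.sqrt b * (2 * Real.sqrt (π / (2 * b)) - 12)
        = 2 * (Real.sqrt b * Real.sqrt (π / (2 * b))) - 12 * Real.sqrt b := by ring
    rw [hexp, sqrt_key hb'] at h
    linarith
  · filter_upwards [self_mem_nhdsWithin] with b hb
    have hb' : (0:ℝ) < b := hb
    have h := mul_le_mul_of_nonneg_left (SS_upper hb') (Real.sqrt_nonneg b)
    have hexp : Real.sqrt b * (2 * Real.sqrt (π / (2 * b)) + 8)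
        = 2 * (Real.sqrt b * Real.sqrt (π / (2 * b))) + 8 * Real.sqrt b := by ring
    rw [hexp, sqrt_key hb'] at h
    linarith

lemma gk_zero_le {b : ℝ} (hb : 0 < b) : gk b 0 ≤ Real.sqrt (π / b) := by
  rw [gk_eq_Ioc, ← integral_gaussian b]
  exact setIntegral_le_integral (integrable_exp_neg_mul_sq hb)
    (ae_of_all _ fun x => (Real.exp_pos _).le)

lemma SS_dom {b : ℝ} (hb : 0 < b) : SS b ≤ 4 * Real.sqrt (π / b) := by
  have htail : TT b ≤ Real.sqrt (π / b) := by
    have h1 : TT b ≤ ∑' n : ℕ, 2 * gk b ((n : ℤ) + 1) := by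
      apply Summable.tsum_le_tsum (fun n => ?_) (summable_tail_sq hb)
        ((hasSum_tail hb).summable.mul_left 2)
      nlinarith [gk_le_two hb.le ((n : ℤ) + 1), gk_nonneg b ((n : ℤ) + 1)]
    have h2 : ∑' n : ℕ, 2 * gk b ((n : ℤ) + 1)
        = 2 * ∫ x in Ioi (1:ℝ), Real.exp (-b * x ^ 2) := by
      rw [tsum_mul_left, (hasSum_tail hb).tsum_eq]
    have h3 : ∫ x in Ioi (1:ℝ), Real.exp (-b * x ^ 2)
        ≤ ∫ x in Ioi (0:ℝ), Real.exp (-b * x ^ 2) := by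
      apply setIntegral_mono_set ((integrable_exp_neg_mul_sq hb).integrableOn)
        (ae_of_all _ fun x => (Real.exp_pos _).le)
      exact HasSubset.Subset.eventuallyLE (Ioi_subset_Ioi (by norm_num))
    rw [integral_gaussian_Ioi] at h3
    calc TT b ≤ 2 * ∫ x in Ioi (1:ℝ), Real.exp (-b * x ^ 2) := by rw [← h2]; exact h1
      _ ≤ Real.sqrt (π / b) := by linarith
  have h0 : gk b 0 ^ 2 ≤ 2 * Real.sqrt (π / b) := by
    have := gk_zero_le hb
    nlinarith [gk_le_two hb.le 0, gk_nonneg b 0]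
  rw [SS_eq hb]
  linarith

/-- The integrand of `sFun`, divided by `√α`. -/
noncomputable def Fa (α t : ℝ) : ℝ :=
  ((α / (8 * Real.pi * t)) *
    ∑' k : ℤ, (∫ x in (2 * (k : ℝ) - 1)..(2 * (k : ℝ) + 1),
      Real.exp (-(α * x ^ 2) / (8 * t))) ^ 2) / Real.sqrt α

lemma Fa_eq (α t : ℝ) : Fa α t = ((α / (8 * π * t)) * SS (α / (8 * t))) / Real.sqrt α := by
  unfold Fa SS gk
  have h : ∀ x : ℝ, -(α * x ^ 2) / (8 * t) = -(α / (8 * t)) * x ^ 2 := fun x => by ring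
  simp_rw [h]

lemma sFun_div (α : ℝ) : sFun α / Real.sqrt α = ∫ t in Ioc (0:ℝ) 1, Fa α t := by
  rw [sFun, intervalIntegral.integral_of_le (by norm_num : (0:ℝ) ≤ 1), ← integral_div]
  rfl

lemma Fa_bound {α t : ℝ} (hα : 0 < α) (ht : t ∈ Ioc (0:ℝ) 1) :
    ‖Fa α t‖ ≤ 4 / Real.sqrt (8 * π * t) := by
  have ht0 : 0 < t := ht.1
  have hb : 0 < α / (8 * t) := by positivity
  rw [Fa_eq, Real.norm_eq_abs, abs_of_nonneg (div_nonneg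
    (mul_nonneg (by positivity) (SS_nonneg _)) (Real.sqrt_nonneg _))]
  have hSS := SS_dom hb
  have h1 : π / (α / (8 * t)) = (8 * π * t) / α := by
    field_simp
  have h2 : Real.sqrt ((8 * π * t) / α) = Real.sqrt (8 * π * t) / Real.sqrt α :=
    Real.sqrt_div (by positivity) α
  have hA : Real.sqrt α * Real.sqrt α = α := Real.mul_self_sqrt hα.le
  have hB : Real.sqrt (8 * π * t) * Real.sqrt (8 * π * t) = 8 * π * t :=
    Real.mul_self_sqrt (by positivity)
  have hAp : 0 < Real.sqrt α := Real.sqrt_pos.mpr hα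
  have hBp : 0 < Real.sqrt (8 * π * t) := Real.sqrt_pos.mpr (by positivity)
  have step : ((α / (8 * π * t)) * SS (α / (8 * t))) / Real.sqrt α
      ≤ ((α / (8 * π * t)) * (4 * Real.sqrt (π / (α / (8 * t))))) / Real.sqrt α := by
    gcongr
  refine step.trans (le_of_eq ?_)
  rw [h1, h2, div_eq_div_iff hAp.ne' hBp.ne']
  calc α / (8 * π * t) * (4 * (Real.sqrt (8 * π * t) / Real.sqrt α)) * Real.sqrt (8 * π * t)
      = 4 * α * (Real.sqrt (8 * π * t) * Real.sqrt (8 * π * t)) / ((8 * π * t) * Real.sqrt α) := by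
        ring
    _ = 4 * α * (8 * π * t) / ((8 * π * t) * Real.sqrt α) := by rw [hB]
    _ = 4 * α / Real.sqrt α := by
        rw [show 4 * α * (8 * π * t) = (8 * π * t) * (4 * α) by ring,
          mul_div_mul_left _ _ (by positivity : (8 * π * t) ≠ 0)]
    _ = 4 * Real.sqrt α := by rw [mul_div_assoc, Real.div_sqrt]

lemma Fa_lim {t : ℝ} (ht : t ∈ Ioc (0:ℝ) 1) :
    Tendsto (fun α : ℝ => Fa α t) (nhdsWithin 0 (Ioi 0))
      (nhds (1 / (2 * Real.sqrt π * Real.sqrt t))) := by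
  have ht0 : 0 < t := ht.1
  have hmap : Tendsto (fun α : ℝ => α / (8 * t)) (nhdsWithin 0 (Ioi 0))
      (nhdsWithin 0 (Ioi 0)) := by
    refine tendsto_nhdsWithin_iff.mpr ⟨?_, ?_⟩
    · have hcont : Tendsto (fun α : ℝ => α / (8 * t)) (nhds 0) (nhds 0) := by
        have h := (continuous_id.div_const (8 * t)).tendsto (0:ℝ)
        simpa using h
      exact hcont.mono_left nhdsWithin_le_nhds
    · filter_upwards [self_mem_nhdsWithin] with α hα
      exact mem_Ioi.mpr (div_pos hα (by positivity))
  have hcomp := claim1.comp hmap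
  have hmul := hcomp.const_mul (Real.sqrt (8 * t) / (8 * π * t))
  have hπ : Real.sqrt π * Real.sqrt π = π := Real.mul_self_sqrt Real.pi_pos.le
  have htt : Real.sqrt t * Real.sqrt t = t := Real.mul_self_sqrt ht0.le
  have h16 : Real.sqrt (8 * t) * Real.sqrt (2 * π) = 4 * (Real.sqrt π * Real.sqrt t) := by
    rw [← Real.sqrt_mul (by positivity : (0:ℝ) ≤ 8 * t) (2 * π),
      ← Real.sqrt_mul Real.pi_pos.le t,
      show (8 * t) * (2 * π) = 4 ^ 2 * (π * t) by ring,
      Real.sqrt_mul (by positivity : (0:ℝ) ≤ (4:ℝ) ^ 2) (π * t),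
      Real.sqrt_sq (by norm_num : (0:ℝ) ≤ 4)]
  have hlimeq : Real.sqrt (8 * t) / (8 * π * t) * Real.sqrt (2 * π)
      = 1 / (2 * Real.sqrt π * Real.sqrt t) := by
    rw [div_mul_eq_mul_div, h16, div_eq_div_iff (by positivity) (by positivity)]
    linear_combination (8 * Real.sqrt t * Real.sqrt t) * hπ + (8 * π) * htt
  rw [hlimeq] at hmul
  refine hmul.congr' ?_
  filter_upwards [self_mem_nhdsWithin] with α hα
  have hα' : (0:ℝ) < α := hα
  have hA : Real.sqrt α * Real.sqrt α = α := Real.mul_self_sqrt hα'.le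
  have h1 : Real.sqrt (8 * t) * Real.sqrt (α / (8 * t)) = Real.sqrt α := by
    rw [← Real.sqrt_mul (by positivity : (0:ℝ) ≤ 8 * t)]
    congr 1
    field_simp
  rw [Fa_eq]
  have hAne : Real.sqrt α ≠ 0 := ne_of_gt (Real.sqrt_pos.mpr hα')
  rw [eq_div_iff hAne]
  calc Real.sqrt (8 * t) / (8 * π * t) *
        (Real.sqrt (α / (8 * t)) * SS (α / (8 * t))) * Real.sqrt α
      = (Real.sqrt (8 * t) * Real.sqrt (α / (8 * t))) * Real.sqrt α *
          SS (α / (8 * t)) / (8 * π * t) := by ring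
    _ = Real.sqrt α * Real.sqrt α * SS (α / (8 * t)) / (8 * π * t) := by rw [h1]
    _ = α * SS (α / (8 * t)) / (8 * π * t) := by rw [hA]
    _ = α / (8 * π * t) * SS (α / (8 * t)) := by ring

lemma Fa_meas {α : ℝ} (hα : 0 < α) :
    AEStronglyMeasurable (Fa α) (volume.restrict (Ioc (0:ℝ) 1)) := by
  have hker : ∀ k : ℤ, Measurable (fun t : ℝ =>
      ∫ x in Ioc (2 * (k : ℝ) - 1) (2 * (k : ℝ) + 1),
        Real.exp (-(α / (8 * t)) * x ^ 2)) := by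
    intro k
    have hsm : StronglyMeasurable
        (fun p : ℝ × ℝ => Real.exp (-(α / (8 * p.1)) * p.2 ^ 2)) := by
      apply Measurable.stronglyMeasurable
      fun_prop
    exact (hsm.integral_prod_right'
      (ν := volume.restrict (Ioc (2 * (k : ℝ) - 1) (2 * (k : ℝ) + 1)))).measurable
  have hG : Measurable (fun t : ℝ => ((α / (8 * π * t)) *
      (∑' k : ℤ, ENNReal.ofReal ((∫ x in Ioc (2 * (k : ℝ) - 1) (2 * (k : ℝ) + 1),
        Real.exp (-(α / (8 * t)) * x ^ 2)) ^ 2)).toReal) / Real.sqrt α) := by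
    apply Measurable.div_const
    apply Measurable.mul
    · fun_prop
    · exact (Measurable.ennreal_tsum
        (fun k => ((hker k).pow_const 2).ennreal_ofReal)).ennreal_toReal
  refine (hG.aestronglyMeasurable).congr ?_
  filter_upwards [ae_restrict_mem measurableSet_Ioc] with t ht
  have ht0 : 0 < t := ht.1
  have hb : 0 < α / (8 * t) := by positivity
  rw [Fa_eq]
  congr 2
  simp_rw [← gk_eq_Ioc]
  rw [← ENNReal.ofReal_tsum_of_nonneg (fun k => sq_nonneg _) (summable_sq_int hb),
    ENNReal.toReal_ofReal (tsum_nonneg fun k => sq_nonneg _)]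
  rfl

lemma bound_int :
    Integrable (fun t : ℝ => 4 / Real.sqrt (8 * π * t)) (volume.restrict (Ioc (0:ℝ) 1)) := by
  have h1 : IntegrableOn (fun t : ℝ => t ^ (-(1/2) : ℝ)) (Ioc (0:ℝ) 1) :=
    (intervalIntegral.intervalIntegrable_rpow' (by norm_num)).1
  refine (h1.const_mul (4 / Real.sqrt (8 * π))).congr ?_
  filter_upwards [ae_restrict_mem measurableSet_Ioc] with t ht
  have ht0 : 0 < t := ht.1
  have hst : 0 < Real.sqrt t := Real.sqrt_pos.mpr ht0
  have hsp : 0 < Real.sqrt (8 * π) := Real.sqrt_pos.mpr (by positivity)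
  rw [Real.sqrt_mul (by positivity : (0:ℝ) ≤ 8 * π) t, Real.rpow_neg ht0.le,
    ← Real.sqrt_eq_rpow]
  field_simp

lemma int_lim :
    ∫ t in Ioc (0:ℝ) 1, 1 / (2 * Real.sqrt π * Real.sqrt t) = 1 / Real.sqrt π := by
  have hπ : (0:ℝ) < Real.sqrt π := Real.sqrt_pos.mpr Real.pi_pos
  have hcong : ∫ t in Ioc (0:ℝ) 1, 1 / (2 * Real.sqrt π * Real.sqrt t)
      = ∫ t in Ioc (0:ℝ) 1, (1 / (2 * Real.sqrt π)) * t ^ (-(1/2) : ℝ) := by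
    apply setIntegral_congr_fun measurableSet_Ioc
    intro t ht
    have ht0 : 0 < t := ht.1
    have hst : 0 < Real.sqrt t := Real.sqrt_pos.mpr ht0
    dsimp only
    rw [Real.rpow_neg ht0.le, ← Real.sqrt_eq_rpow]
    field_simp
  rw [hcong, integral_const_mul, ← intervalIntegral.integral_of_le (by norm_num : (0:ℝ) ≤ 1),
    integral_rpow (Or.inl (by norm_num)), Real.one_rpow,
    Real.zero_rpow (by norm_num : -(1/2 : ℝ) + 1 ≠ 0)]
  norm_num
  field_simp

end Aux

/-- `s(α) ~ √(α/π)` as `α → 0⁺`, i.e. `s(α)/√α → 1/√π`. -/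
theorem sFun_asymp_zero :
    Tendsto (fun α : ℝ => sFun α / Real.sqrt α) (nhdsWithin 0 (Set.Ioi 0))
      (nhds (1 / Real.sqrt Real.pi)) := by
  have hlim : Tendsto (fun α : ℝ => ∫ t in Set.Ioc (0:ℝ) 1, Fa α t)
      (nhdsWithin 0 (Set.Ioi 0))
      (nhds (∫ t in Set.Ioc (0:ℝ) 1, 1 / (2 * Real.sqrt Real.pi * Real.sqrt t))) := by
    apply MeasureTheory.tendsto_integral_filter_of_dominated_convergence
      (bound := fun t => 4 / Real.sqrt (8 * Real.pi * t))
    · filter_upwards [self_mem_nhdsWithin] with α hα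
      exact Fa_meas hα
    · filter_upwards [self_mem_nhdsWithin] with α hα
      filter_upwards [ae_restrict_mem measurableSet_Ioc] with t ht
      exact Fa_bound hα ht
    · exact bound_int
    · filter_upwards [ae_restrict_mem measurableSet_Ioc] with t ht
      exact Fa_lim ht
  rw [int_lim] at hlim
  have heq : (fun α : ℝ => ∫ t in Set.Ioc (0:ℝ) 1, Fa α t)
      = fun α : ℝ => sFun α / Real.sqrt α :=
    funext fun α => (sFun_div α).symm
  rwa [heq] at hlim
end

section
/- One has lim_{α → 0⁺} √α · Σ_{k∈ℤ} ( ∫_{2k−1}^{2k+1} e^{−αx²/8} dx )² = 4√π; that is, Σ_{k∈ℤ} (∫_{2k−1}^{2k+1} e^{−αx²/8} dx)² ∼ 4√π/√α as α → 0⁺. -/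
open MeasureTheory Filter

open Topology Real

namespace GaussAsympAux

lemma sumNat {c : ℝ} (hc : 0 < c) {v : ℕ → ℝ} (hv : ∀ n : ℕ, (n : ℝ) ≤ v n ^ 2) :
    Summable fun n : ℕ => Real.exp (-c * v n ^ 2) := by
  have h1 : Real.exp (-c) < 1 := Real.exp_lt_one_iff.mpr (by linarith)
  refine Summable.of_nonneg_of_le (fun n => (Real.exp_pos _).le) (fun n => ?_)
    (summable_geometric_of_lt_one (Real.exp_pos _).le h1)
  rw [← Real.exp_nat_mul]
  apply Real.exp_le_exp.mpr
  nlinarith [hv n, hc]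

lemma sumInt {c : ℝ} (hc : 0 < c) {w : ℤ → ℝ} (hw : ∀ k : ℤ, |(k : ℝ)| ≤ w k ^ 2) :
    Summable fun k : ℤ => Real.exp (-c * w k ^ 2) := by
  apply Summable.of_nat_of_neg_add_one
  · apply sumNat hc (v := fun n : ℕ => w n)
    intro n
    have := hw (n : ℤ)
    simpa using this
  · apply sumNat hc (v := fun n : ℕ => w (-(n + 1)))
    intro n
    have := hw (-(n + 1))
    have h2 : |((-((n : ℤ) + 1) : ℤ) : ℝ)| = (n : ℝ) + 1 := by
      push_cast
      rw [abs_neg, abs_of_nonneg (by positivity)]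
    rw [h2] at this
    linarith

noncomputable def thetaT (c : ℝ) : ℝ := ∑' n : ℤ, Real.exp (-c * (n : ℝ) ^ 2)

noncomputable def thetaN (c : ℝ) : ℝ := ∑' n : ℕ, Real.exp (-c * (2 * (n : ℝ) + 1) ^ 2)

lemma summable_T {c : ℝ} (hc : 0 < c) :
    Summable fun n : ℤ => Real.exp (-c * (n : ℝ) ^ 2) := by
  apply sumInt hc
  intro k
  rcases eq_or_ne k 0 with rfl | hk
  · simp
  · have h1 : (1 : ℝ) ≤ |(k : ℝ)| := by
      have := Int.one_le_abs hk
      calc (1:ℝ) = ((1:ℤ):ℝ) := by norm_num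
        _ ≤ ((|k| : ℤ) : ℝ) := by exact_mod_cast this
        _ = |(k : ℝ)| := by push_cast; rfl
    nlinarith [abs_nonneg (k:ℝ), sq_abs (k:ℝ)]

lemma summable_A {c : ℝ} (hc : 0 < c) :
    Summable fun n : ℕ => Real.exp (-c * ((n : ℝ)) ^ 2) := by
  apply sumNat hc; intro n
  rcases Nat.eq_zero_or_pos n with rfl | hn
  · simp
  · have : (1:ℝ) ≤ (n:ℝ) := by exact_mod_cast hn
    nlinarith

lemma summable_sh {c : ℝ} (hc : 0 < c) :
    Summable fun n : ℕ => Real.exp (-c * ((n : ℝ) + 1) ^ 2) := by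
  apply sumNat hc; intro n
  have : (0:ℝ) ≤ (n:ℝ) := n.cast_nonneg
  nlinarith

lemma summable_N {c : ℝ} (hc : 0 < c) :
    Summable fun n : ℕ => Real.exp (-c * (2 * (n : ℝ) + 1) ^ 2) := by
  apply sumNat hc; intro n
  have : (0:ℝ) ≤ (n:ℝ) := n.cast_nonneg
  nlinarith

lemma A_eq {c : ℝ} (hc : 0 < c) :
    (∑' n : ℕ, Real.exp (-c * ((n : ℝ)) ^ 2))
      = 1 + ∑' n : ℕ, Real.exp (-c * ((n : ℝ) + 1) ^ 2) := by
  rw [Summable.tsum_eq_zero_add (summable_A hc)]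
  norm_num

lemma T_eq {c : ℝ} (hc : 0 < c) :
    thetaT c = 1 + 2 * ∑' n : ℕ, Real.exp (-c * ((n : ℝ) + 1) ^ 2) := by
  rw [thetaT, tsum_of_nat_of_neg_add_one (f := fun k : ℤ => Real.exp (-c * (k : ℝ) ^ 2))
    (by simpa using summable_A hc)
    (by
      have := summable_sh hc
      apply this.congr
      intro n
      push_cast
      ring_nf)]
  push_cast
  simp only [neg_sq]
  rw [A_eq hc]
  ring

lemma T_one_le {c : ℝ} (hc : 0 < c) : 1 ≤ thetaT c := by
  rw [T_eq hc]
  have : 0 ≤ ∑' n : ℕ, Real.exp (-c * ((n : ℝ) + 1) ^ 2) :=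
    tsum_nonneg fun n => (Real.exp_pos _).le
  linarith

lemma T_le {c : ℝ} (hc : 1 ≤ c) :
    thetaT c ≤ 1 + 2 * (Real.exp (-c) * (1 - Real.exp (-1))⁻¹) := by
  have hc0 : 0 < c := by linarith
  rw [T_eq hc0]
  have hgeom : Summable fun n : ℕ => Real.exp (-c) * Real.exp (-1) ^ n :=
    (summable_geometric_of_lt_one (Real.exp_pos _).le
      (Real.exp_lt_one_iff.mpr (by norm_num))).mul_left _
  have hle : ∀ n : ℕ, Real.exp (-c * ((n : ℝ) + 1) ^ 2)
      ≤ Real.exp (-c) * Real.exp (-1) ^ n := by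
    intro n
    rw [← Real.exp_nat_mul, ← Real.exp_add]
    apply Real.exp_le_exp.mpr
    have h0 : (0:ℝ) ≤ (n:ℝ) := n.cast_nonneg
    nlinarith [mul_nonneg (by linarith : (0:ℝ) ≤ c) (sq_nonneg (n:ℝ)),
      mul_nonneg (by linarith : (0:ℝ) ≤ 2*c-1) h0]
  have := Summable.tsum_le_tsum hle (summable_sh hc0) hgeom
  rw [tsum_mul_left, tsum_geometric_of_lt_one (Real.exp_pos _).le
      (Real.exp_lt_one_iff.mpr (by norm_num))] at this
  linarith

lemma T_tendsto : Tendsto thetaT atTop (𝓝 1) := by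
  apply tendsto_of_tendsto_of_tendsto_of_le_of_le'
    (tendsto_const_nhds (x := (1:ℝ)))
    (h := fun c => 1 + 2 * (Real.exp (-c) * (1 - Real.exp (-1))⁻¹))
  · have h1 : Tendsto (fun c : ℝ => Real.exp (-c)) atTop (𝓝 0) :=
      Real.tendsto_exp_neg_atTop_nhds_zero
    have := ((h1.mul_const ((1 - Real.exp (-1))⁻¹)).const_mul 2).const_add 1
    simpa using this
  · filter_upwards [eventually_ge_atTop (1:ℝ)] with c hc using T_one_le (by linarith)
  · filter_upwards [eventually_ge_atTop (1:ℝ)] with c hc using T_le hc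

lemma T_transform {c : ℝ} (hc : 0 < c) :
    Real.sqrt c * thetaT c = Real.sqrt π * thetaT (π ^ 2 / c) := by
  have hpi := Real.pi_pos
  have ha : 0 < c / π := div_pos hc hpi
  have key := Real.tsum_exp_neg_mul_int_sq ha
  have h1 : (fun n : ℤ => Real.exp (-π * (c / π) * (n : ℝ) ^ 2))
      = fun n : ℤ => Real.exp (-c * (n : ℝ) ^ 2) := by
    funext n; congr 1; field_simp
  have h2 : (fun n : ℤ => Real.exp (-π / (c / π) * (n : ℝ) ^ 2))
      = fun n : ℤ => Real.exp (-(π ^ 2 / c) * (n : ℝ) ^ 2) := by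
    funext n; congr 1; rw [div_div_eq_mul_div]; ring
  rw [h1, h2] at key
  have hsq : ((c / π) ^ ((1:ℝ) / 2 : ℝ)) = Real.sqrt c / Real.sqrt π := by
    rw [← Real.sqrt_eq_rpow, Real.sqrt_div hc.le]
  rw [thetaT, thetaT, key, hsq]
  have h3 : Real.sqrt c ≠ 0 := ne_of_gt (Real.sqrt_pos.mpr hc)
  have h4 : Real.sqrt π ≠ 0 := ne_of_gt (Real.sqrt_pos.mpr hpi)
  field_simp


lemma sqrt_T_tendsto :
    Tendsto (fun c => Real.sqrt c * thetaT c) (𝓝[>] (0:ℝ)) (𝓝 (Real.sqrt π)) := by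
  have hpi := Real.pi_pos
  have h1 : Tendsto (fun c : ℝ => π ^ 2 / c) (𝓝[>] (0:ℝ)) atTop := by
    have := tendsto_inv_nhdsGT_zero (𝕜 := ℝ)
    have h2 := this.const_mul_atTop (show (0:ℝ) < π ^ 2 by positivity)
    apply h2.congr
    intro c; rw [div_eq_mul_inv]
  have h3 : Tendsto (fun c : ℝ => Real.sqrt π * thetaT (π ^ 2 / c)) (𝓝[>] (0:ℝ))
      (𝓝 (Real.sqrt π * 1)) := (T_tendsto.comp h1).const_mul _
  rw [mul_one] at h3
  apply h3.congr'
  filter_upwards [self_mem_nhdsWithin] with c hc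
  exact (T_transform hc).symm

lemma N_eq {c : ℝ} (hc : 0 < c) :
    thetaN c = (thetaT c - thetaT (4 * c)) / 2 := by
  have h4c : 0 < 4 * c := by linarith
  have heven : Summable fun k : ℕ => Real.exp (-c * ((2 * k : ℕ) : ℝ) ^ 2) := by
    apply (summable_A h4c).congr
    intro n; push_cast; ring_nf
  have hodd : Summable fun k : ℕ => Real.exp (-c * ((2 * k + 1 : ℕ) : ℝ) ^ 2) := by
    apply (summable_N hc).congr
    intro n; push_cast; ring_nf
  have key := tsum_even_add_odd (f := fun n : ℕ => Real.exp (-c * (n : ℝ) ^ 2)) heven hodd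
  have e1 : (∑' k : ℕ, Real.exp (-c * ((2 * k : ℕ) : ℝ) ^ 2)) = ∑' k : ℕ,
      Real.exp (-(4 * c) * (k : ℝ) ^ 2) := by
    apply tsum_congr; intro n; push_cast; ring_nf
  have e2 : (∑' k : ℕ, Real.exp (-c * ((2 * k + 1 : ℕ) : ℝ) ^ 2)) = thetaN c := by
    apply tsum_congr; intro n; push_cast; ring_nf
  rw [e1, e2] at key
  -- key : A(4c) + N c = A c
  have hTA : ∀ {d : ℝ}, 0 < d → thetaT d = 2 * (∑' n : ℕ, Real.exp (-d * (n : ℝ) ^ 2)) - 1 := by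
    intro d hd
    rw [T_eq hd, A_eq hd]; ring
  have hT1 := hTA hc
  have hT2 := hTA h4c
  rw [hT1, hT2]
  linarith [key]

lemma tendsto_mul_pos {r : ℝ} (hr : 0 < r) :
    Tendsto (fun x : ℝ => r * x) (𝓝[>] (0:ℝ)) (𝓝[>] (0:ℝ)) := by
  apply tendsto_nhdsWithin_of_tendsto_nhds_of_eventually_within
  · have : Tendsto (fun x : ℝ => r * x) (𝓝 (0:ℝ)) (𝓝 (r * 0)) :=
      (continuous_const.mul continuous_id).tendsto 0
    rw [mul_zero] at this
    exact this.mono_left nhdsWithin_le_nhds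
  · filter_upwards [self_mem_nhdsWithin] with x hx
    exact mul_pos hr hx

lemma sqrt_N_tendsto :
    Tendsto (fun c => Real.sqrt c * thetaN c) (𝓝[>] (0:ℝ)) (𝓝 (Real.sqrt π / 4)) := by
  have h4 : Tendsto (fun c : ℝ => Real.sqrt (4 * c) * thetaT (4 * c)) (𝓝[>] (0:ℝ))
      (𝓝 (Real.sqrt π)) := sqrt_T_tendsto.comp (tendsto_mul_pos (by norm_num))
  have hlim : Tendsto (fun c : ℝ => (Real.sqrt c * thetaT c) / 2
      - (Real.sqrt (4 * c) * thetaT (4 * c)) / 4) (𝓝[>] (0:ℝ))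
      (𝓝 (Real.sqrt π / 2 - Real.sqrt π / 4)) :=
    (sqrt_T_tendsto.div_const 2).sub (h4.div_const 4)
  have heq : Real.sqrt π / 2 - Real.sqrt π / 4 = Real.sqrt π / 4 := by ring
  rw [heq] at hlim
  apply hlim.congr'
  filter_upwards [self_mem_nhdsWithin] with c hc
  have hsq : Real.sqrt (4 * c) = 2 * Real.sqrt c := by
    rw [Real.sqrt_mul (by norm_num) c, show (4:ℝ) = 2 ^ 2 by norm_num, Real.sqrt_sq (by norm_num)]
  rw [N_eq hc, hsq]
  ring

lemma absfact : ∀ k : ℤ, |(k : ℝ)| ≤ (2 * |(k : ℝ)| + 1) ^ 2 := by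
  intro k
  have := abs_nonneg (k : ℝ)
  nlinarith

lemma absfact2 : ∀ k : ℤ, |(k : ℝ)| ≤ (max (2 * |(k : ℝ)| - 1) 0) ^ 2 := by
  intro k
  rcases eq_or_ne k 0 with rfl | hk
  · simp
  · have h1 : (1 : ℝ) ≤ |(k : ℝ)| := by
      have := Int.one_le_abs hk
      calc (1:ℝ) = ((1:ℤ):ℝ) := by norm_num
        _ ≤ ((|k| : ℤ) : ℝ) := by exact_mod_cast this
        _ = |(k : ℝ)| := by push_cast; rfl
    rw [max_eq_left (by linarith)]
    nlinarith

lemma summable_M {c : ℝ} (hc : 0 < c) :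
    Summable fun k : ℤ => Real.exp (-c * (2 * |(k : ℝ)| + 1) ^ 2) :=
  sumInt hc absfact

lemma summable_m {c : ℝ} (hc : 0 < c) :
    Summable fun k : ℤ => Real.exp (-c * (max (2 * |(k : ℝ)| - 1) 0) ^ 2) :=
  sumInt hc absfact2

lemma N_shift {c : ℝ} (hc : 0 < c) :
    (∑' n : ℕ, Real.exp (-c * (2 * ((n : ℝ) + 1) + 1) ^ 2)) = thetaN c - Real.exp (-c) := by
  have h := Summable.tsum_eq_zero_add (summable_N hc)
  rw [thetaN]
  have h0 : Real.exp (-c * (2 * ((0:ℕ) : ℝ) + 1) ^ 2) = Real.exp (-c) := by norm_num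
  rw [h, h0]
  have : (∑' n : ℕ, Real.exp (-c * (2 * ((n + 1 : ℕ) : ℝ) + 1) ^ 2))
      = ∑' n : ℕ, Real.exp (-c * (2 * ((n : ℝ) + 1) + 1) ^ 2) := by
    apply tsum_congr; intro n; push_cast; ring_nf
  rw [this]; ring

lemma sumM_eq {c : ℝ} (hc : 0 < c) :
    (∑' k : ℤ, Real.exp (-c * (2 * |(k : ℝ)| + 1) ^ 2)) = 2 * thetaN c - Real.exp (-c) := by
  have habs : ∀ n : ℕ, |((-((n:ℤ) + 1) : ℤ) : ℝ)| = (n : ℝ) + 1 := by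
    intro n; push_cast; rw [abs_neg, abs_of_nonneg (by positivity)]
  have habs2 : ∀ n : ℕ, |(((n:ℤ)) : ℝ)| = (n : ℝ) := by
    intro n; push_cast; exact abs_of_nonneg n.cast_nonneg
  have hnat : Summable fun n : ℕ => Real.exp (-c * (2 * |((n:ℤ):ℝ)| + 1) ^ 2) := by
    apply (summable_N hc).congr
    intro n; rw [habs2 n]
  have hneg : Summable fun n : ℕ => Real.exp (-c * (2 * |((-((n:ℤ) + 1) : ℤ) : ℝ)| + 1) ^ 2) := by
    have hs : Summable fun n : ℕ => Real.exp (-c * (2 * ((n:ℝ) + 1) + 1) ^ 2) := by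
      apply sumNat hc; intro n
      have h0 : (0:ℝ) ≤ (n:ℝ) := n.cast_nonneg
      nlinarith
    apply hs.congr
    intro n; rw [habs n]
  rw [tsum_of_nat_of_neg_add_one (f := fun k : ℤ => Real.exp (-c * (2 * |(k : ℝ)| + 1) ^ 2))
    hnat hneg]
  have e1 : (∑' n : ℕ, Real.exp (-c * (2 * |((n:ℤ):ℝ)| + 1) ^ 2)) = thetaN c := by
    apply tsum_congr; intro n; rw [habs2 n]
  have e2 : (∑' n : ℕ, Real.exp (-c * (2 * |((-((n:ℤ) + 1) : ℤ) : ℝ)| + 1) ^ 2))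
      = thetaN c - Real.exp (-c) := by
    rw [← N_shift hc]
    apply tsum_congr; intro n; rw [habs n]
  rw [e1, e2]; ring

lemma summ_eq {c : ℝ} (hc : 0 < c) :
    (∑' k : ℤ, Real.exp (-c * (max (2 * |(k : ℝ)| - 1) 0) ^ 2)) = 1 + 2 * thetaN c := by
  have habs : ∀ n : ℕ, |((-((n:ℤ) + 1) : ℤ) : ℝ)| = (n : ℝ) + 1 := by
    intro n; push_cast; rw [abs_neg, abs_of_nonneg (by positivity)]
  have habs2 : ∀ n : ℕ, |(((n:ℤ)) : ℝ)| = (n : ℝ) := by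
    intro n; push_cast; exact abs_of_nonneg n.cast_nonneg
  have hmax : ∀ n : ℕ, max (2 * ((n:ℝ) + 1) - 1) 0 = 2 * (n:ℝ) + 1 := by
    intro n
    rw [max_eq_left (by linarith [n.cast_nonneg (α := ℝ)])]
    ring
  -- nat part function equals: n=0 ↦ exp 0, else shifted
  have hnatfun : ∀ n : ℕ, Real.exp (-c * (max (2 * |((n:ℤ):ℝ)| - 1) 0) ^ 2)
      = (fun m : ℕ => Real.exp (-c * (max (2 * (m:ℝ) - 1) 0) ^ 2)) n := by
    intro n; rw [habs2 n]
  have hshift : ∀ n : ℕ, max (2 * ((n:ℝ) + 1) - 1) 0 = 2 * (n:ℝ) + 1 := hmax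
  have hsum0 : Summable fun m : ℕ => Real.exp (-c * (max (2 * (m:ℝ) - 1) 0) ^ 2) := by
    apply sumNat hc; intro n
    rcases Nat.eq_zero_or_pos n with rfl | hn
    · simp
    · have h1 : (1:ℝ) ≤ (n:ℝ) := by exact_mod_cast hn
      rw [max_eq_left (by linarith)]
      nlinarith
  have hnat : Summable fun n : ℕ => Real.exp (-c * (max (2 * |((n:ℤ):ℝ)| - 1) 0) ^ 2) :=
    hsum0.congr fun n => (hnatfun n).symm
  have hneg : Summable fun n : ℕ =>
      Real.exp (-c * (max (2 * |((-((n:ℤ) + 1) : ℤ) : ℝ)| - 1) 0) ^ 2) := by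
    apply (summable_N hc).congr
    intro n; rw [habs n, hmax n]
  rw [tsum_of_nat_of_neg_add_one
    (f := fun k : ℤ => Real.exp (-c * (max (2 * |(k : ℝ)| - 1) 0) ^ 2)) hnat hneg]
  have e1 : (∑' n : ℕ, Real.exp (-c * (max (2 * |((n:ℤ):ℝ)| - 1) 0) ^ 2)) = 1 + thetaN c := by
    rw [tsum_congr hnatfun, Summable.tsum_eq_zero_add hsum0]
    have h0 : Real.exp (-c * (max (2 * ((0:ℕ):ℝ) - 1) 0) ^ 2) = 1 := by
      norm_num
    rw [h0]
    congr 1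
    apply tsum_congr; intro n
    have : max (2 * ((n+1:ℕ):ℝ) - 1) 0 = 2 * (n:ℝ) + 1 := by
      push_cast
      rw [max_eq_left (by linarith [n.cast_nonneg (α := ℝ)])]
      ring
    rw [this]
  have e2 : (∑' n : ℕ, Real.exp (-c * (max (2 * |((-((n:ℤ) + 1) : ℤ) : ℝ)| - 1) 0) ^ 2))
      = thetaN c := by
    apply tsum_congr; intro n; rw [habs n, hmax n]
  rw [e1, e2]; ring

lemma integrable_g {α : ℝ} (a b : ℝ) :
    IntervalIntegrable (fun x : ℝ => Real.exp (-(α * x ^ 2) / 8)) volume a b :=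
  (Real.continuous_exp.comp (by continuity)).intervalIntegrable a b

lemma int_lb {α : ℝ} (hα : 0 < α) (k : ℤ) :
    2 * Real.exp (-(α * (2 * |(k : ℝ)| + 1) ^ 2) / 8)
      ≤ ∫ x in (2 * (k : ℝ) - 1)..(2 * (k : ℝ) + 1), Real.exp (-(α * x ^ 2) / 8) := by
  have hab : 2 * (k : ℝ) - 1 ≤ 2 * (k : ℝ) + 1 := by linarith
  have hconst : (∫ _ in (2 * (k : ℝ) - 1)..(2 * (k : ℝ) + 1),
      Real.exp (-(α * (2 * |(k : ℝ)| + 1) ^ 2) / 8))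
      = 2 * Real.exp (-(α * (2 * |(k : ℝ)| + 1) ^ 2) / 8) := by
    rw [intervalIntegral.integral_const, smul_eq_mul]
    ring_nf
  rw [← hconst]
  apply intervalIntegral.integral_mono_on hab (intervalIntegrable_const) (integrable_g _ _)
  intro x hx
  apply Real.exp_le_exp.mpr
  have hx1 := hx.1
  have hx2 := hx.2
  have hxsq : x ^ 2 ≤ (2 * |(k : ℝ)| + 1) ^ 2 := by
    rcases abs_cases (k : ℝ) with ⟨h1, h2⟩ | ⟨h1, h2⟩ <;> rw [h1] <;> nlinarith
  nlinarith [mul_le_mul_of_nonneg_left hxsq hα.le]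

lemma int_ub {α : ℝ} (hα : 0 < α) (k : ℤ) :
    (∫ x in (2 * (k : ℝ) - 1)..(2 * (k : ℝ) + 1), Real.exp (-(α * x ^ 2) / 8))
      ≤ 2 * Real.exp (-(α * (max (2 * |(k : ℝ)| - 1) 0) ^ 2) / 8) := by
  have hab : 2 * (k : ℝ) - 1 ≤ 2 * (k : ℝ) + 1 := by linarith
  have hconst : (∫ _ in (2 * (k : ℝ) - 1)..(2 * (k : ℝ) + 1),
      Real.exp (-(α * (max (2 * |(k : ℝ)| - 1) 0) ^ 2) / 8))
      = 2 * Real.exp (-(α * (max (2 * |(k : ℝ)| - 1) 0) ^ 2) / 8) := by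
    rw [intervalIntegral.integral_const, smul_eq_mul]
    ring_nf
  rw [← hconst]
  apply intervalIntegral.integral_mono_on hab (integrable_g _ _) (intervalIntegrable_const)
  intro x hx
  apply Real.exp_le_exp.mpr
  have hx1 := hx.1
  have hx2 := hx.2
  have hxsq : (max (2 * |(k : ℝ)| - 1) 0) ^ 2 ≤ x ^ 2 := by
    rcases le_or_gt (2 * |(k : ℝ)| - 1) 0 with h | h
    · rw [max_eq_right h]
      simpa using sq_nonneg x
    · rw [max_eq_left h.le]
      rcases abs_cases (k : ℝ) with ⟨h1, h2⟩ | ⟨h1, h2⟩ <;> rw [h1] at h ⊢ <;> nlinarith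
  nlinarith [mul_le_mul_of_nonneg_left hxsq hα.le]

lemma sq_int_lb {α : ℝ} (hα : 0 < α) (k : ℤ) :
    4 * Real.exp (-(α / 4) * (2 * |(k : ℝ)| + 1) ^ 2)
      ≤ (∫ x in (2 * (k : ℝ) - 1)..(2 * (k : ℝ) + 1), Real.exp (-(α * x ^ 2) / 8)) ^ 2 := by
  have h1 := int_lb hα k
  have h2 : (0:ℝ) ≤ 2 * Real.exp (-(α * (2 * |(k : ℝ)| + 1) ^ 2) / 8) := by positivity
  have e : (2 * Real.exp (-(α * (2 * |(k : ℝ)| + 1) ^ 2) / 8)) ^ 2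
      = 4 * Real.exp (-(α / 4) * (2 * |(k : ℝ)| + 1) ^ 2) := by
    rw [mul_pow, sq (Real.exp _), ← Real.exp_add]
    norm_num
    ring_nf
  rw [← e]
  exact pow_le_pow_left₀ h2 h1 2

lemma sq_int_ub {α : ℝ} (hα : 0 < α) (k : ℤ) :
    (∫ x in (2 * (k : ℝ) - 1)..(2 * (k : ℝ) + 1), Real.exp (-(α * x ^ 2) / 8)) ^ 2
      ≤ 4 * Real.exp (-(α / 4) * (max (2 * |(k : ℝ)| - 1) 0) ^ 2) := by
  have h1 := int_ub hα k
  have h0 : (0:ℝ) ≤ ∫ x in (2 * (k : ℝ) - 1)..(2 * (k : ℝ) + 1), Real.exp (-(α * x ^ 2) / 8) :=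
    intervalIntegral.integral_nonneg (by linarith) (fun u _ => (Real.exp_pos _).le)
  have e : (2 * Real.exp (-(α * (max (2 * |(k : ℝ)| - 1) 0) ^ 2) / 8)) ^ 2
      = 4 * Real.exp (-(α / 4) * (max (2 * |(k : ℝ)| - 1) 0) ^ 2) := by
    rw [mul_pow, sq (Real.exp _), ← Real.exp_add]
    norm_num
    ring_nf
  rw [← e]
  exact pow_le_pow_left₀ h0 h1 2

lemma summable_sq {α : ℝ} (hα : 0 < α) :
    Summable fun k : ℤ =>
      (∫ x in (2 * (k : ℝ) - 1)..(2 * (k : ℝ) + 1), Real.exp (-(α * x ^ 2) / 8)) ^ 2 := by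
  have hc : 0 < α / 4 := by linarith
  exact Summable.of_nonneg_of_le (fun k => sq_nonneg _) (fun k => sq_int_ub hα k)
    ((summable_m hc).mul_left 4)

lemma sandwich_lb {α : ℝ} (hα : 0 < α) :
    8 * thetaN (α / 4) - 4
      ≤ ∑' k : ℤ, (∫ x in (2 * (k : ℝ) - 1)..(2 * (k : ℝ) + 1),
          Real.exp (-(α * x ^ 2) / 8)) ^ 2 := by
  have hc : 0 < α / 4 := by linarith
  have h := Summable.tsum_le_tsum (fun k => sq_int_lb hα k) ((summable_M hc).mul_left 4)
    (summable_sq hα)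
  rw [tsum_mul_left, sumM_eq hc] at h
  have : Real.exp (-(α / 4)) ≤ 1 := Real.exp_le_one_iff.mpr (by linarith)
  linarith

lemma sandwich_ub {α : ℝ} (hα : 0 < α) :
    (∑' k : ℤ, (∫ x in (2 * (k : ℝ) - 1)..(2 * (k : ℝ) + 1),
        Real.exp (-(α * x ^ 2) / 8)) ^ 2)
      ≤ 8 * thetaN (α / 4) + 4 := by
  have hc : 0 < α / 4 := by linarith
  have h := Summable.tsum_le_tsum (fun k => sq_int_ub hα k) (summable_sq hα)
    ((summable_m hc).mul_left 4)
  rw [tsum_mul_left, summ_eq hc] at h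
  linarith

end GaussAsympAux

open GaussAsympAux in
/-- `Σ_{k∈ℤ} (∫_{2k-1}^{2k+1} e^{-αx²/8} dx)² ~ 4√π/√α` as `α → 0⁺`,
i.e. `√α · Σ_{k∈ℤ} (∫_{2k-1}^{2k+1} e^{-αx²/8} dx)² → 4√π`. -/
theorem gaussian_interval_sum_asymp :
    Tendsto (fun α : ℝ => Real.sqrt α *
        ∑' k : ℤ, (∫ x in (2 * (k : ℝ) - 1)..(2 * (k : ℝ) + 1),
          Real.exp (-(α * x ^ 2) / 8)) ^ 2)
      (nhdsWithin 0 (Set.Ioi 0)) (nhds (4 * Real.sqrt Real.pi)) := by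
  have hdiv4 : Tendsto (fun α : ℝ => α / 4) (𝓝[>] (0:ℝ)) (𝓝[>] (0:ℝ)) :=
    (tendsto_mul_pos (show (0:ℝ) < 1/4 by norm_num)).congr (fun x => by ring)
  have hcomp : Tendsto (fun α : ℝ => Real.sqrt (α / 4) * thetaN (α / 4)) (𝓝[>] (0:ℝ))
      (𝓝 (Real.sqrt π / 4)) := sqrt_N_tendsto.comp hdiv4
  have hsqrt : Tendsto (fun α : ℝ => Real.sqrt α) (𝓝[>] (0:ℝ)) (𝓝 0) := by
    have := (Real.continuous_sqrt.tendsto 0).mono_left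
      (nhdsWithin_le_nhds (s := Set.Ioi (0:ℝ)))
    simpa using this
  have hsq2 : ∀ {α : ℝ}, 0 < α → Real.sqrt α = 2 * Real.sqrt (α / 4) := by
    intro α hα
    rw [Real.sqrt_div hα.le, show (4:ℝ) = 2 ^ 2 by norm_num,
      Real.sqrt_sq (by norm_num : (0:ℝ) ≤ 2)]
    ring
  have hlow : Tendsto (fun α : ℝ => 16 * (Real.sqrt (α / 4) * thetaN (α / 4))
      - 4 * Real.sqrt α) (𝓝[>] (0:ℝ)) (𝓝 (4 * Real.sqrt π)) := by
    have h := (hcomp.const_mul 16).sub (hsqrt.const_mul 4)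
    have he : 16 * (Real.sqrt π / 4) - 4 * 0 = 4 * Real.sqrt π := by ring
    rwa [he] at h
  have hup : Tendsto (fun α : ℝ => 16 * (Real.sqrt (α / 4) * thetaN (α / 4))
      + 4 * Real.sqrt α) (𝓝[>] (0:ℝ)) (𝓝 (4 * Real.sqrt π)) := by
    have h := (hcomp.const_mul 16).add (hsqrt.const_mul 4)
    have he : 16 * (Real.sqrt π / 4) + 4 * 0 = 4 * Real.sqrt π := by ring
    rwa [he] at h
  apply tendsto_of_tendsto_of_tendsto_of_le_of_le' hlow hup
  · filter_upwards [self_mem_nhdsWithin] with α hα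
    have hα' : (0:ℝ) < α := hα
    have hs := sandwich_lb hα'
    calc 16 * (Real.sqrt (α / 4) * thetaN (α / 4)) - 4 * Real.sqrt α
        = Real.sqrt α * (8 * thetaN (α / 4) - 4) := by rw [hsq2 hα']; ring
      _ ≤ _ := mul_le_mul_of_nonneg_left hs (Real.sqrt_nonneg α)
  · filter_upwards [self_mem_nhdsWithin] with α hα
    have hα' : (0:ℝ) < α := hα
    have hs := sandwich_ub hα'
    calc Real.sqrt α * (∑' k : ℤ, (∫ x in (2 * (k : ℝ) - 1)..(2 * (k : ℝ) + 1),
            Real.exp (-(α * x ^ 2) / 8)) ^ 2)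
        ≤ Real.sqrt α * (8 * thetaN (α / 4) + 4) :=
          mul_le_mul_of_nonneg_left hs (Real.sqrt_nonneg α)
      _ = 16 * (Real.sqrt (α / 4) * thetaN (α / 4)) + 4 * Real.sqrt α := by
          rw [hsq2 hα']; ring
end
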